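/- arXiv:2105.04016 — 5 statements merged into one kernel-verified Lean document; each statement's English description precedes it below -/
import Mathlib

section
/- Let f(x) = ⟨Ax, x⟩ + ⟨a, x⟩ + α and g(x) = ⟨Bx, x⟩ + ⟨b, x⟩ + β be second degree polynomials on R^n with A, B self-adjoint, and let Z be a standard normal random vector in R^n. Then (E[|∇f(Z) − ∇g(Z)|^2])^{1/2} ≤ √2 · (E[|f(Z) − g(Z)|^2])^{1/2}. -/
open MeasureTheory ProbabilityTheory Real Fintype MeasureTheory.Measure
open scoped ENNReal NNReal

namespace GradAux

noncomputable def G (x : ℝ) : ℝ := Real.exp (-x ^ 2 / 2)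

lemma integrable_pow_mul_G (k : ℕ) : Integrable (fun x : ℝ => x ^ k * G x) := by
  have h := integrable_rpow_mul_exp_neg_mul_sq (b := (1:ℝ)/2) (by norm_num) (s := (k : ℝ))
    (lt_of_lt_of_le neg_one_lt_zero (Nat.cast_nonneg k))
  have he : (fun x : ℝ => x ^ (k : ℝ) * Real.exp (-(1/2) * x ^ 2))
      = fun x : ℝ => x ^ k * G x := by
    funext x
    rw [Real.rpow_natCast]
    congr 1
    unfold G
    congr 1
    ring
  rwa [he] at h

lemma hasDerivAt_G (x : ℝ) : HasDerivAt G (-x * G x) x := by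
  have h1 : HasDerivAt (fun x : ℝ => -x ^ 2 / 2) (-x) x := by
    have := ((hasDerivAt_pow 2 x).neg).div_const 2
    simpa using this.congr_deriv (by push_cast; ring)
  show HasDerivAt (fun x => Real.exp (-x ^ 2 / 2)) _ x
  simpa [G, mul_comm] using h1.exp

lemma G_rec (k : ℕ) : ∫ x : ℝ, x ^ (k + 2) * G x = (k + 1 : ℝ) * ∫ x : ℝ, x ^ k * G x := by
  have hderiv : ∀ x : ℝ, HasDerivAt (fun x : ℝ => x ^ (k + 1) * G x)
      ((k + 1 : ℝ) * (x ^ k * G x) - x ^ (k + 2) * G x) x := by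
    intro x
    have : HasDerivAt (fun x : ℝ => x ^ (k + 1) * G x) _ x :=
      (hasDerivAt_pow (k + 1) x).mul (hasDerivAt_G x)
    convert this using 1
    push_cast
    ring
  have h1 : Integrable (fun x : ℝ => (k + 1 : ℝ) * (x ^ k * G x) - x ^ (k + 2) * G x) :=
    ((integrable_pow_mul_G k).const_mul _).sub (integrable_pow_mul_G (k + 2))
  have h0 := integral_eq_zero_of_hasDerivAt_of_integrable hderiv h1 (integrable_pow_mul_G (k + 1))
  rw [integral_sub ((integrable_pow_mul_G k).const_mul _) (integrable_pow_mul_G (k + 2)),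
    integral_const_mul] at h0
  linarith

lemma G_zero : ∫ x : ℝ, x ^ (0:ℕ) * G x = Real.sqrt (2 * π) := by
  have h := integral_gaussian (1/2)
  have he : (fun x : ℝ => Real.exp (-(1/2) * x ^ 2)) = fun x : ℝ => x ^ (0:ℕ) * G x := by
    funext x; unfold G; rw [pow_zero, one_mul]; congr 1; ring
  rw [he] at h
  rw [show π / (1/2) = 2 * π by ring] at h
  exact h

lemma integrable_G : Integrable G := by
  simpa using integrable_pow_mul_G 0

lemma G_one : ∫ x : ℝ, x ^ (1:ℕ) * G x = 0 := by
  have hderiv : ∀ x : ℝ, HasDerivAt (fun x : ℝ => -G x) (x ^ (1:ℕ) * G x) x := by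
    intro x
    simpa [pow_one, mul_comm, Pi.neg_def] using (hasDerivAt_G x).neg.congr_deriv (by ring)
  exact integral_eq_zero_of_hasDerivAt_of_integrable hderiv (integrable_pow_mul_G 1)
    integrable_G.neg


lemma pdf_eq (x : ℝ) : gaussianPDFReal 0 1 x = (Real.sqrt (2 * π))⁻¹ * G x := by
  unfold G
  rw [gaussianPDFReal]
  norm_num

lemma gaussian_density :
    (gaussianReal 0 1 : Measure ℝ) =
      (volume : Measure ℝ).withDensity (fun x => ((gaussianPDFReal 0 1 x).toNNReal : ℝ≥0∞)) := by
  rw [gaussianReal_of_var_ne_zero _ one_ne_zero]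
  rfl

lemma integral_gaussianReal (f : ℝ → ℝ) :
    ∫ x, f x ∂(gaussianReal 0 1) = (Real.sqrt (2 * π))⁻¹ * ∫ x, f x * G x := by
  rw [gaussian_density, integral_withDensity_eq_integral_smul
    (by exact (measurable_gaussianPDFReal 0 1).real_toNNReal) f]
  rw [← integral_const_mul]
  congr 1
  funext x
  rw [NNReal.smul_def, smul_eq_mul, Real.coe_toNNReal _ (gaussianPDFReal_nonneg 0 1 x), pdf_eq]
  ring

lemma integrable_pow_gaussianReal (k : ℕ) :
    Integrable (fun x : ℝ => x ^ k) (gaussianReal 0 1) := by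
  rw [gaussian_density, integrable_withDensity_iff_integrable_smul
    (by exact (measurable_gaussianPDFReal 0 1).real_toNNReal)]
  have : (fun x : ℝ => ((gaussianPDFReal 0 1 x).toNNReal : ℝ≥0) • x ^ k)
      = fun x : ℝ => (Real.sqrt (2 * π))⁻¹ * (x ^ k * G x) := by
    funext x
    rw [NNReal.smul_def, smul_eq_mul, Real.coe_toNNReal _ (gaussianPDFReal_nonneg 0 1 x), pdf_eq]
    ring
  rw [this]
  exact (integrable_pow_mul_G k).const_mul _

noncomputable def gm (k : ℕ) : ℝ := ∫ x, x ^ k ∂(gaussianReal 0 1)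

lemma sqrt_two_pi_ne : Real.sqrt (2 * π) ≠ 0 := by
  positivity

lemma gm_zero : gm 0 = 1 := by
  rw [gm, integral_gaussianReal, G_zero, inv_mul_cancel₀ sqrt_two_pi_ne]

lemma gm_one : gm 1 = 0 := by
  rw [gm, integral_gaussianReal, G_one, mul_zero]

lemma gm_two : gm 2 = 1 := by
  rw [gm, integral_gaussianReal, show (2:ℕ) = 0 + 2 from rfl, G_rec, G_zero]
  rw [show ((0:ℕ):ℝ) + 1 = 1 by norm_num, one_mul, inv_mul_cancel₀ sqrt_two_pi_ne]

lemma gm_three : gm 3 = 0 := by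
  rw [gm, integral_gaussianReal, show (3:ℕ) = 1 + 2 from rfl, G_rec, G_one]
  simp

lemma gm_four : gm 4 = 3 := by
  rw [gm, integral_gaussianReal, show (4:ℕ) = 2 + 2 from rfl, G_rec,
    (by rfl : ∫ x : ℝ, x ^ 2 * G x = ∫ x : ℝ, x ^ (0 + 2) * G x), G_rec, G_zero]
  rw [show ((0:ℕ):ℝ) + 1 = 1 by norm_num, show ((2:ℕ):ℝ) + 1 = 3 by norm_num]
  field_simp

/-- Generalization of `Integrable.fin_nat_prod` to arbitrary sigma-finite measures. -/
theorem integrable_pi_prod {n : ℕ} {E : Fin n → Type*}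
    [∀ i, MeasurableSpace (E i)] (μ : ∀ i, Measure (E i)) [∀ i, SigmaFinite (μ i)]
    {f : (i : Fin n) → E i → ℝ} (hf : ∀ i, Integrable (f i) (μ i)) :
    Integrable (fun (x : (i : Fin n) → E i) ↦ ∏ i, f i (x i)) (Measure.pi μ) := by
  induction n with
  | zero => simp only [Finset.univ_eq_empty, Finset.prod_empty,
      integrable_const_iff, one_ne_zero, pi_empty_univ, ENNReal.one_lt_top, or_true]; exact Or.inr ⟨by simp [pi_empty_univ]⟩
  | succ n n_ih =>
      have := ((measurePreserving_piFinSuccAbove μ 0).symm)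
      rw [← this.integrable_comp_emb (MeasurableEquiv.measurableEmbedding _)]
      simp_rw [MeasurableEquiv.piFinSuccAbove_symm_apply, Fin.insertNthEquiv,
        Fin.prod_univ_succ, Fin.insertNth_zero]
      simp only [Fin.zero_succAbove, Function.comp_def, Fin.cons_zero, Fin.cons_succ]
      have : Integrable (fun (x : (j : Fin n) → E (Fin.succ j)) ↦ ∏ j, f (Fin.succ j) (x j))
          (Measure.pi fun j => μ (Fin.succ j)) := n_ih _ (fun i ↦ hf _)
      exact Integrable.mul_prod (hf 0) this

/-- Generalization of `integral_fin_nat_prod_eq_prod` to arbitrary sigma-finite measures. -/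
theorem integral_pi_prod {n : ℕ} {E : Fin n → Type*}
    [∀ i, MeasurableSpace (E i)] (μ : ∀ i, Measure (E i)) [∀ i, SigmaFinite (μ i)]
    (f : (i : Fin n) → E i → ℝ) :
    ∫ x : (i : Fin n) → E i, ∏ i, f i (x i) ∂(Measure.pi μ) = ∏ i, ∫ x, f i x ∂(μ i) := by
  induction n with
  | zero =>
      simp only [Finset.univ_eq_empty, Finset.prod_empty, integral_const,
        measureReal_def, pi_empty_univ, ENNReal.toReal_one, smul_eq_mul, mul_one, pow_zero, one_smul]
  | succ n n_ih =>
      calc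
        _ = ∫ x : E 0 × ((i : Fin n) → E (Fin.succ i)),
            f 0 x.1 * ∏ i : Fin n, f (Fin.succ i) (x.2 i)
            ∂((μ 0).prod (Measure.pi fun i => μ (Fin.succ i))) := by
          rw [← ((measurePreserving_piFinSuccAbove μ 0).symm).integral_comp']
          simp_rw [MeasurableEquiv.piFinSuccAbove_symm_apply, Fin.insertNthEquiv,
            Fin.prod_univ_succ, Fin.insertNth_zero, Equiv.coe_fn_mk, Fin.cons_succ,
            Fin.zero_succAbove, Fin.cons_zero]
          rfl
        _ = (∫ x, f 0 x ∂(μ 0)) * ∏ i : Fin n, ∫ (x : E (Fin.succ i)), f (Fin.succ i) x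
            ∂(μ (Fin.succ i)) := by
          rw [← n_ih, ← integral_prod_mul]
        _ = ∏ i, ∫ x, f i x ∂(μ i) := by rw [Fin.prod_univ_succ]

variable {n : ℕ}

noncomputable abbrev μn (n : ℕ) : Measure (Fin n → ℝ) :=
  Measure.pi fun _ : Fin n => gaussianReal 0 1

lemma integrable_mono (e : Fin n → ℕ) :
    Integrable (fun z : Fin n → ℝ => ∏ m, (z m) ^ (e m)) (μn n) :=
  integrable_pi_prod _ (fun i => integrable_pow_gaussianReal (e i))

lemma integral_mono (e : Fin n → ℕ) :
    ∫ z : Fin n → ℝ, ∏ m, (z m) ^ (e m) ∂(μn n) = ∏ m, gm (e m) :=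
  integral_pi_prod _ (fun i x => x ^ (e i))


/-! ### Products of `gm` values -/

lemma prodgm_one (i : Fin n) (k : ℕ) :
    ∏ m, gm (if m = i then k else 0) = gm k := by
  have h : ∀ m : Fin n, gm (if m = i then k else 0) = if m = i then gm k else 1 := by
    intro m; split <;> simp [gm_zero]
  rw [Finset.prod_congr rfl fun m _ => h m, Finset.prod_ite_eq']
  simp

lemma prodgm_two {i j : Fin n} (hij : i ≠ j) (k₁ k₂ : ℕ) :
    ∏ m, gm ((if m = i then k₁ else 0) + (if m = j then k₂ else 0)) = gm k₁ * gm k₂ := by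
  have h : ∀ m : Fin n, gm ((if m = i then k₁ else 0) + (if m = j then k₂ else 0))
      = (if m = i then gm k₁ else 1) * (if m = j then gm k₂ else 1) := by
    intro m
    by_cases h1 : m = i <;> by_cases h2 : m = j <;> simp_all [gm_zero]
  rw [Finset.prod_congr rfl fun m _ => h m, Finset.prod_mul_distrib,
    Finset.prod_ite_eq', Finset.prod_ite_eq']
  simp

lemma prodgm_three {i j k : Fin n} (hij : i ≠ j) (hik : i ≠ k) (hjk : j ≠ k)
    (k₁ k₂ k₃ : ℕ) :
    ∏ m, gm ((if m = i then k₁ else 0) + (if m = j then k₂ else 0)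
      + (if m = k then k₃ else 0)) = gm k₁ * gm k₂ * gm k₃ := by
  have h : ∀ m : Fin n, gm ((if m = i then k₁ else 0) + (if m = j then k₂ else 0)
      + (if m = k then k₃ else 0))
      = (if m = i then gm k₁ else 1) * (if m = j then gm k₂ else 1)
        * (if m = k then gm k₃ else 1) := by
    intro m
    by_cases h1 : m = i <;> by_cases h2 : m = j <;> by_cases h3 : m = k <;>
      simp_all [gm_zero]
  rw [Finset.prod_congr rfl fun m _ => h m, Finset.prod_mul_distrib,
    Finset.prod_mul_distrib, Finset.prod_ite_eq', Finset.prod_ite_eq',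
    Finset.prod_ite_eq']
  simp

lemma prodgm_four {i j k l : Fin n} (hij : i ≠ j) (hik : i ≠ k) (hil : i ≠ l)
    (hjk : j ≠ k) (hjl : j ≠ l) (hkl : k ≠ l) (k₁ k₂ k₃ k₄ : ℕ) :
    ∏ m, gm ((if m = i then k₁ else 0) + (if m = j then k₂ else 0)
      + (if m = k then k₃ else 0) + (if m = l then k₄ else 0))
      = gm k₁ * gm k₂ * gm k₃ * gm k₄ := by
  have h : ∀ m : Fin n, gm ((if m = i then k₁ else 0) + (if m = j then k₂ else 0)
      + (if m = k then k₃ else 0) + (if m = l then k₄ else 0))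
      = (if m = i then gm k₁ else 1) * (if m = j then gm k₂ else 1)
        * (if m = k then gm k₃ else 1) * (if m = l then gm k₄ else 1) := by
    intro m
    by_cases h1 : m = i <;> by_cases h2 : m = j <;> by_cases h3 : m = k <;>
      by_cases h4 : m = l <;> simp_all [gm_zero]
  rw [Finset.prod_congr rfl fun m _ => h m, Finset.prod_mul_distrib,
    Finset.prod_mul_distrib, Finset.prod_mul_distrib, Finset.prod_ite_eq',
    Finset.prod_ite_eq', Finset.prod_ite_eq', Finset.prod_ite_eq']
  simp

/-! ### Monomial representations -/

lemma rep1 (i : Fin n) :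
    (fun z : Fin n → ℝ => z i)
      = fun z : Fin n → ℝ => ∏ m, (z m) ^ (if m = i then 1 else 0) := by
  funext z
  simp [pow_ite, Finset.prod_ite_eq']

lemma rep2 (i j : Fin n) :
    (fun z : Fin n → ℝ => z i * z j)
      = fun z : Fin n → ℝ =>
        ∏ m, (z m) ^ ((if m = i then 1 else 0) + (if m = j then 1 else 0)) := by
  funext z
  simp only [pow_add, Finset.prod_mul_distrib, pow_ite, pow_one, pow_zero]
  simp only [Finset.prod_ite_eq', Finset.mem_univ, if_true]

lemma rep3 (i j k : Fin n) :
    (fun z : Fin n → ℝ => z i * z j * z k)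
      = fun z : Fin n → ℝ =>
        ∏ m, (z m) ^ ((if m = i then 1 else 0) + (if m = j then 1 else 0)
          + (if m = k then 1 else 0)) := by
  funext z
  simp only [pow_add, Finset.prod_mul_distrib, pow_ite, pow_one, pow_zero]
  simp only [Finset.prod_ite_eq', Finset.mem_univ, if_true]

lemma rep4 (i j k l : Fin n) :
    (fun z : Fin n → ℝ => z i * z j * z k * z l)
      = fun z : Fin n → ℝ =>
        ∏ m, (z m) ^ ((if m = i then 1 else 0) + (if m = j then 1 else 0)
          + (if m = k then 1 else 0) + (if m = l then 1 else 0)) := by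
  funext z
  simp only [pow_add, Finset.prod_mul_distrib, pow_ite, pow_one, pow_zero]
  simp only [Finset.prod_ite_eq', Finset.mem_univ, if_true]

/-! ### Integrability of monomials -/

lemma int1 (i : Fin n) : Integrable (fun z : Fin n → ℝ => z i) (μn n) := by
  rw [rep1]; exact integrable_mono _

lemma int2 (i j : Fin n) : Integrable (fun z : Fin n → ℝ => z i * z j) (μn n) := by
  rw [rep2]; exact integrable_mono _

lemma int3 (i j k : Fin n) :
    Integrable (fun z : Fin n → ℝ => z i * z j * z k) (μn n) := by
  rw [rep3]; exact integrable_mono _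

lemma int4 (i j k l : Fin n) :
    Integrable (fun z : Fin n → ℝ => z i * z j * z k * z l) (μn n) := by
  rw [rep4]; exact integrable_mono _


/-! ### Values of monomial integrals -/

lemma mono1 (i : Fin n) : ∫ z : Fin n → ℝ, z i ∂(μn n) = 0 := by
  rw [rep1, integral_mono, prodgm_one, gm_one]

lemma mono2 (i j : Fin n) :
    ∫ z : Fin n → ℝ, z i * z j ∂(μn n) = if i = j then 1 else 0 := by
  rw [rep2, integral_mono]
  by_cases hij : i = j
  · subst hij
    have hE : ∀ m : Fin n, ((if m = i then 1 else 0) + (if m = i then 1 else 0))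
        = (if m = i then 2 else 0) := by
      intro m; by_cases h : m = i <;> simp [h]
    simp only [hE]
    rw [prodgm_one, gm_two]
    simp
  · rw [prodgm_two hij, gm_one, if_neg hij, zero_mul]

lemma mono3 (i j k : Fin n) :
    ∫ z : Fin n → ℝ, z i * z j * z k ∂(μn n) = 0 := by
  rw [rep3, integral_mono]
  by_cases hij : i = j
  · subst hij
    by_cases hik : i = k
    · subst hik
      have hE : ∀ m : Fin n, ((if m = i then 1 else 0) + (if m = i then 1 else 0)
          + (if m = i then 1 else 0)) = (if m = i then 3 else 0) := by
        intro m; by_cases h : m = i <;> simp [h]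
      simp only [hE]
      rw [prodgm_one, gm_three]
    · have hE : ∀ m : Fin n, ((if m = i then 1 else 0) + (if m = i then 1 else 0)
          + (if m = k then 1 else 0))
          = ((if m = i then 2 else 0) + (if m = k then 1 else 0)) := by
        intro m; by_cases h1 : m = i <;> by_cases h2 : m = k <;> simp_all
      simp only [hE]
      rw [prodgm_two hik, gm_one, mul_zero]
  · by_cases hik : i = k
    · subst hik
      have hE : ∀ m : Fin n, ((if m = i then 1 else 0) + (if m = j then 1 else 0)
          + (if m = i then 1 else 0))
          = ((if m = i then 2 else 0) + (if m = j then 1 else 0)) := by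
        intro m; by_cases h1 : m = i <;> by_cases h2 : m = j <;> simp_all
      simp only [hE]
      rw [prodgm_two hij, gm_one, mul_zero]
    · by_cases hjk : j = k
      · subst hjk
        have hE : ∀ m : Fin n, ((if m = i then 1 else 0) + (if m = j then 1 else 0)
            + (if m = j then 1 else 0))
            = ((if m = i then 1 else 0) + (if m = j then 2 else 0)) := by
          intro m; by_cases h1 : m = i <;> by_cases h2 : m = j <;> simp_all
        simp only [hE]
        rw [prodgm_two hij, gm_one, zero_mul]
      · rw [prodgm_three hij hik hjk, gm_one]
        ring

lemma mono4 (i j k l : Fin n) :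
    ∫ z : Fin n → ℝ, z i * z j * z k * z l ∂(μn n)
      = (if i = j then (1:ℝ) else 0) * (if k = l then 1 else 0)
        + (if i = k then (1:ℝ) else 0) * (if j = l then 1 else 0)
        + (if i = l then (1:ℝ) else 0) * (if j = k then 1 else 0) := by
  rw [rep4, integral_mono]
  by_cases hij : i = j
  · subst hij
    by_cases hkl : k = l
    · subst hkl
      by_cases hik : i = k
      · subst hik
        have hE : ∀ m : Fin n, ((if m = i then 1 else 0) + (if m = i then 1 else 0)
            + (if m = i then 1 else 0) + (if m = i then 1 else 0))
            = (if m = i then 4 else 0) := by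
          intro m; by_cases h : m = i <;> simp [h]
        simp only [hE]
        rw [prodgm_one, gm_four]
        norm_num
      · have hE : ∀ m : Fin n, ((if m = i then 1 else 0) + (if m = i then 1 else 0)
            + (if m = k then 1 else 0) + (if m = k then 1 else 0))
            = ((if m = i then 2 else 0) + (if m = k then 2 else 0)) := by
          intro m; by_cases h1 : m = i <;> by_cases h2 : m = k <;> simp_all
        simp only [hE]
        rw [prodgm_two hik, gm_two]
        simp [hik]
    · by_cases hik : i = k
      · subst hik
        have hE : ∀ m : Fin n, ((if m = i then 1 else 0) + (if m = i then 1 else 0)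
            + (if m = i then 1 else 0) + (if m = l then 1 else 0))
            = ((if m = i then 3 else 0) + (if m = l then 1 else 0)) := by
          intro m; by_cases h1 : m = i <;> by_cases h2 : m = l <;> simp_all
        simp only [hE]
        rw [prodgm_two hkl, gm_three]
        simp [hkl]
      · by_cases hil : i = l
        · subst hil
          have hE : ∀ m : Fin n, ((if m = i then 1 else 0) + (if m = i then 1 else 0)
              + (if m = k then 1 else 0) + (if m = i then 1 else 0))
              = ((if m = i then 3 else 0) + (if m = k then 1 else 0)) := by
            intro m; by_cases h1 : m = i <;> by_cases h2 : m = k <;> simp_all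
          simp only [hE]
          rw [prodgm_two hik, gm_three]
          simp [hik, Ne.symm hik, hkl]
        · have hE : ∀ m : Fin n, ((if m = i then 1 else 0) + (if m = i then 1 else 0)
              + (if m = k then 1 else 0) + (if m = l then 1 else 0))
              = ((if m = i then 2 else 0) + (if m = k then 1 else 0)
                + (if m = l then 1 else 0)) := by
            intro m
            by_cases h1 : m = i <;> by_cases h2 : m = k <;> by_cases h3 : m = l <;> simp_all
          simp only [hE]
          rw [prodgm_three hik hil hkl, gm_one]
          simp [hik, hil, hkl]
  · by_cases hik : i = k
    · subst hik
      by_cases hjl : j = l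
      · subst hjl
        have hE : ∀ m : Fin n, ((if m = i then 1 else 0) + (if m = j then 1 else 0)
            + (if m = i then 1 else 0) + (if m = j then 1 else 0))
            = ((if m = i then 2 else 0) + (if m = j then 2 else 0)) := by
          intro m; by_cases h1 : m = i <;> by_cases h2 : m = j <;> simp_all
        simp only [hE]
        rw [prodgm_two hij, gm_two]
        simp [hij]
      · by_cases hil : i = l
        · subst hil
          have hE : ∀ m : Fin n, ((if m = i then 1 else 0) + (if m = j then 1 else 0)
              + (if m = i then 1 else 0) + (if m = i then 1 else 0))
              = ((if m = i then 3 else 0) + (if m = j then 1 else 0)) := by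
            intro m; by_cases h1 : m = i <;> by_cases h2 : m = j <;> simp_all
          simp only [hE]
          rw [prodgm_two hij, gm_three]
          simp [hij, Ne.symm hij, hjl]
        · have hE : ∀ m : Fin n, ((if m = i then 1 else 0) + (if m = j then 1 else 0)
              + (if m = i then 1 else 0) + (if m = l then 1 else 0))
              = ((if m = i then 2 else 0) + (if m = j then 1 else 0)
                + (if m = l then 1 else 0)) := by
            intro m
            by_cases h1 : m = i <;> by_cases h2 : m = j <;> by_cases h3 : m = l <;> simp_all
          simp only [hE]
          rw [prodgm_three hij hil hjl, gm_one]
          simp [hij, hil, hjl]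
    · by_cases hil : i = l
      · subst hil
        by_cases hjk : j = k
        · subst hjk
          have hE : ∀ m : Fin n, ((if m = i then 1 else 0) + (if m = j then 1 else 0)
              + (if m = j then 1 else 0) + (if m = i then 1 else 0))
              = ((if m = i then 2 else 0) + (if m = j then 2 else 0)) := by
            intro m; by_cases h1 : m = i <;> by_cases h2 : m = j <;> simp_all
          simp only [hE]
          rw [prodgm_two hij, gm_two]
          simp [hij, hik]
        · have hE : ∀ m : Fin n, ((if m = i then 1 else 0) + (if m = j then 1 else 0)
              + (if m = k then 1 else 0) + (if m = i then 1 else 0))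
              = ((if m = i then 2 else 0) + (if m = j then 1 else 0)
                + (if m = k then 1 else 0)) := by
            intro m
            by_cases h1 : m = i <;> by_cases h2 : m = j <;> by_cases h3 : m = k <;> simp_all
          simp only [hE]
          rw [prodgm_three hij hik hjk, gm_one]
          simp [hij, hik, hjk, Ne.symm hik]
      · by_cases hjk : j = k
        · subst hjk
          by_cases hjl : j = l
          · subst hjl
            have hE : ∀ m : Fin n, ((if m = i then 1 else 0) + (if m = j then 1 else 0)
                + (if m = j then 1 else 0) + (if m = j then 1 else 0))
                = ((if m = i then 1 else 0) + (if m = j then 3 else 0)) := by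
              intro m; by_cases h1 : m = i <;> by_cases h2 : m = j <;> simp_all
            simp only [hE]
            rw [prodgm_two hij, gm_one]
            simp [hij, hik, hil]
          · have hE : ∀ m : Fin n, ((if m = i then 1 else 0) + (if m = j then 1 else 0)
                + (if m = j then 1 else 0) + (if m = l then 1 else 0))
                = ((if m = i then 1 else 0) + (if m = j then 2 else 0)
                  + (if m = l then 1 else 0)) := by
              intro m
              by_cases h1 : m = i <;> by_cases h2 : m = j <;> by_cases h3 : m = l <;> simp_all
            simp only [hE]
            rw [prodgm_three hij hil hjl, gm_one]
            simp [hij, hik, hil, hjl]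
        · by_cases hjl : j = l
          · subst hjl
            have hE : ∀ m : Fin n, ((if m = i then 1 else 0) + (if m = j then 1 else 0)
                + (if m = k then 1 else 0) + (if m = j then 1 else 0))
                = ((if m = i then 1 else 0) + (if m = j then 2 else 0)
                  + (if m = k then 1 else 0)) := by
              intro m
              by_cases h1 : m = i <;> by_cases h2 : m = j <;> by_cases h3 : m = k <;> simp_all
            simp only [hE]
            rw [prodgm_three hij hik hjk, gm_one]
            simp [hij, hik, hjk, Ne.symm hjk]
          · by_cases hkl : k = l
            · subst hkl
              have hE : ∀ m : Fin n, ((if m = i then 1 else 0) + (if m = j then 1 else 0)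
                  + (if m = k then 1 else 0) + (if m = k then 1 else 0))
                  = ((if m = i then 1 else 0) + (if m = j then 1 else 0)
                    + (if m = k then 2 else 0)) := by
                intro m
                by_cases h1 : m = i <;> by_cases h2 : m = j <;> by_cases h3 : m = k <;> simp_all
              simp only [hE]
              rw [prodgm_three hij hik hjk, gm_one]
              simp [hij, hik, hjk]
            · rw [prodgm_four hij hik hil hjk hjl hkl, gm_one]
              simp [hij, hik, hil, hjk, hjl, hkl]


instance {n : ℕ} : IsProbabilityMeasure (μn n) := by infer_instance

lemma expandA (r : Fin n → ℝ) (c0 : ℝ) :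
    (fun z : Fin n → ℝ => (2 * ∑ j, r j * z j + c0) ^ 2)
      = fun z : Fin n → ℝ => (∑ j, ∑ k, (4 * (r j * r k)) * (z j * z k))
        + (∑ j, (4 * (c0 * r j)) * z j) + c0 ^ 2 := by
  funext z
  have h1 : (∑ j, r j * z j) * (∑ k, r k * z k)
      = ∑ j, ∑ k, (r j * r k) * (z j * z k) := by
    rw [Finset.sum_mul_sum]
    exact Finset.sum_congr rfl fun j _ => Finset.sum_congr rfl fun k _ => by ring
  have h2 : ∑ j, ∑ k, (4 * (r j * r k)) * (z j * z k)
      = 4 * ∑ j, ∑ k, (r j * r k) * (z j * z k) := by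
    rw [Finset.mul_sum]
    refine Finset.sum_congr rfl fun j _ => ?_
    rw [Finset.mul_sum]
    exact Finset.sum_congr rfl fun k _ => by ring
  have h3 : ∑ j, (4 * (c0 * r j)) * z j = 4 * c0 * ∑ j, r j * z j := by
    rw [Finset.mul_sum]
    exact Finset.sum_congr rfl fun j _ => by ring
  rw [h2, h3, ← h1]
  ring

lemma intA1 (r : Fin n → ℝ) (c0 : ℝ) :
    Integrable (fun z : Fin n → ℝ => (2 * ∑ j, r j * z j + c0) ^ 2) (μn n) := by
  rw [expandA]
  exact ((integrable_finset_sum _ fun j _ => integrable_finset_sum _ fun k _ =>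
    (int2 j k).const_mul _).add (integrable_finset_sum _ fun j _ =>
    (int1 j).const_mul _)).add (integrable_const _)

lemma lemA1 (r : Fin n → ℝ) (c0 : ℝ) :
    ∫ z : Fin n → ℝ, (2 * ∑ j, r j * z j + c0) ^ 2 ∂(μn n)
      = 4 * (∑ j, (r j) ^ 2) + c0 ^ 2 := by
  rw [expandA]
  have hI1 : Integrable (fun z : Fin n → ℝ =>
      ∑ j, ∑ k, (4 * (r j * r k)) * (z j * z k)) (μn n) :=
    integrable_finset_sum _ fun j _ => integrable_finset_sum _ fun k _ =>
      (int2 j k).const_mul _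
  have hI2 : Integrable (fun z : Fin n → ℝ => ∑ j, (4 * (c0 * r j)) * z j) (μn n) :=
    integrable_finset_sum _ fun j _ => (int1 j).const_mul _
  have hI12 : Integrable (fun z : Fin n → ℝ =>
      (∑ j, ∑ k, (4 * (r j * r k)) * (z j * z k)) + ∑ j, (4 * (c0 * r j)) * z j) (μn n) :=
    hI1.add hI2
  rw [integral_add hI12 (integrable_const _), integral_add hI1 hI2,
    integral_finset_sum _ (fun j _ => integrable_finset_sum _ fun k _ =>
      (int2 j k).const_mul _),
    integral_finset_sum _ (fun j _ => (int1 j).const_mul _)]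
  simp only [integral_const_mul, mono1, mono2, mul_zero, Finset.sum_const_zero,
    integral_const, measure_univ, probReal_univ, ENNReal.toReal_one, smul_eq_mul, one_mul, add_zero]
  congr 1
  rw [Finset.mul_sum]
  refine Finset.sum_congr rfl fun j _ => ?_
  rw [integral_finset_sum _ (fun k _ => (int2 j k).const_mul _)]
  simp only [integral_const_mul, mono2, mul_ite, mul_one, mul_zero, Finset.sum_ite_eq,
    Finset.mem_univ, if_true]
  ring


lemma expandB (C : Matrix (Fin n) (Fin n) ℝ) (c : Fin n → ℝ) (d : ℝ) :
    (fun z : Fin n → ℝ => (∑ i, ∑ j, C i j * (z i * z j) + ∑ i, c i * z i + d) ^ 2)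
      = fun z : Fin n → ℝ =>
        (∑ i, ∑ k, ∑ j, ∑ l, (C i j * C k l) * (z i * z j * z k * z l))
        + (∑ i, ∑ j, ∑ k, (2 * (C i j * c k)) * (z i * z j * z k))
        + (∑ i, ∑ j, ((c i * c j) + 2 * d * C i j) * (z i * z j))
        + (∑ i, (2 * d * c i) * z i)
        + d ^ 2 := by
  funext z
  set S := ∑ i, ∑ j, C i j * (z i * z j) with hS
  set L := ∑ i, c i * z i with hL
  have hSS : S * S = ∑ i, ∑ k, ∑ j, ∑ l, (C i j * C k l) * (z i * z j * z k * z l) := by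
    rw [hS, Finset.sum_mul_sum]
    refine Finset.sum_congr rfl fun i _ => ?_
    refine Finset.sum_congr rfl fun k _ => ?_
    rw [Finset.sum_mul_sum]
    refine Finset.sum_congr rfl fun j _ => ?_
    refine Finset.sum_congr rfl fun l _ => ?_
    ring
  have hSL : S * L = ∑ i, ∑ j, ∑ k, (C i j * c k) * (z i * z j * z k) := by
    rw [hS, hL, Finset.sum_mul]
    refine Finset.sum_congr rfl fun i _ => ?_
    rw [Finset.sum_mul_sum]
    refine Finset.sum_congr rfl fun j _ => ?_
    refine Finset.sum_congr rfl fun k _ => ?_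
    ring
  have hLL : L * L = ∑ i, ∑ j, (c i * c j) * (z i * z j) := by
    rw [hL, Finset.sum_mul_sum]
    refine Finset.sum_congr rfl fun i _ => ?_
    refine Finset.sum_congr rfl fun j _ => ?_
    ring
  have hdS : d * S = ∑ i, ∑ j, (d * C i j) * (z i * z j) := by
    rw [hS, Finset.mul_sum]
    refine Finset.sum_congr rfl fun i _ => ?_
    rw [Finset.mul_sum]
    refine Finset.sum_congr rfl fun j _ => ?_
    ring
  have hdL : d * L = ∑ i, (d * c i) * z i := by
    rw [hL, Finset.mul_sum]
    refine Finset.sum_congr rfl fun i _ => ?_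
    ring
  have h2SL : ∑ i, ∑ j, ∑ k, (2 * (C i j * c k)) * (z i * z j * z k)
      = 2 * ∑ i, ∑ j, ∑ k, (C i j * c k) * (z i * z j * z k) := by
    rw [Finset.mul_sum]
    refine Finset.sum_congr rfl fun i _ => ?_
    rw [Finset.mul_sum]
    refine Finset.sum_congr rfl fun j _ => ?_
    rw [Finset.mul_sum]
    refine Finset.sum_congr rfl fun k _ => ?_
    ring
  have hmix : ∑ i, ∑ j, ((c i * c j) + 2 * d * C i j) * (z i * z j)
      = (∑ i, ∑ j, (c i * c j) * (z i * z j)) + 2 * ∑ i, ∑ j, (d * C i j) * (z i * z j) := by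
    rw [Finset.mul_sum, ← Finset.sum_add_distrib]
    refine Finset.sum_congr rfl fun i _ => ?_
    rw [Finset.mul_sum, ← Finset.sum_add_distrib]
    refine Finset.sum_congr rfl fun j _ => ?_
    ring
  have h2dL : ∑ i, (2 * d * c i) * z i = 2 * ∑ i, (d * c i) * z i := by
    rw [Finset.mul_sum]
    refine Finset.sum_congr rfl fun i _ => ?_
    ring
  rw [h2SL, hmix, h2dL, ← hSS, ← hSL, ← hLL, ← hdS, ← hdL]
  ring

lemma intB (C : Matrix (Fin n) (Fin n) ℝ) (c : Fin n → ℝ) (d : ℝ) :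
    Integrable (fun z : Fin n → ℝ =>
      (∑ i, ∑ j, C i j * (z i * z j) + ∑ i, c i * z i + d) ^ 2) (μn n) := by
  rw [expandB]
  exact (((((integrable_finset_sum _ fun i _ => integrable_finset_sum _ fun k _ =>
    integrable_finset_sum _ fun j _ => integrable_finset_sum _ fun l _ =>
    (int4 i j k l).const_mul _).add
    (integrable_finset_sum _ fun i _ => integrable_finset_sum _ fun j _ =>
    integrable_finset_sum _ fun k _ => (int3 i j k).const_mul _)).add
    (integrable_finset_sum _ fun i _ => integrable_finset_sum _ fun j _ =>
    (int2 i j).const_mul _)).add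
    (integrable_finset_sum _ fun i _ => (int1 i).const_mul _)).add
    (integrable_const _))

lemma lemB (C : Matrix (Fin n) (Fin n) ℝ) (c : Fin n → ℝ) (d : ℝ) :
    ∫ z : Fin n → ℝ, (∑ i, ∑ j, C i j * (z i * z j) + ∑ i, c i * z i + d) ^ 2 ∂(μn n)
      = (∑ i, C i i) ^ 2 + ∑ i, ∑ j, C i j * C i j + ∑ i, ∑ j, C i j * C j i
        + ∑ i, (c i) ^ 2 + 2 * d * (∑ i, C i i) + d ^ 2 := by
  rw [expandB]
  have h1 : Integrable (fun z : Fin n → ℝ =>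
      ∑ i, ∑ k, ∑ j, ∑ l, (C i j * C k l) * (z i * z j * z k * z l)) (μn n) :=
    integrable_finset_sum _ fun i _ => integrable_finset_sum _ fun k _ =>
      integrable_finset_sum _ fun j _ => integrable_finset_sum _ fun l _ =>
      (int4 i j k l).const_mul _
  have h2 : Integrable (fun z : Fin n → ℝ =>
      ∑ i, ∑ j, ∑ k, (2 * (C i j * c k)) * (z i * z j * z k)) (μn n) :=
    integrable_finset_sum _ fun i _ => integrable_finset_sum _ fun j _ =>
      integrable_finset_sum _ fun k _ => (int3 i j k).const_mul _
  have h3 : Integrable (fun z : Fin n → ℝ =>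
      ∑ i, ∑ j, ((c i * c j) + 2 * d * C i j) * (z i * z j)) (μn n) :=
    integrable_finset_sum _ fun i _ => integrable_finset_sum _ fun j _ =>
      (int2 i j).const_mul _
  have h4 : Integrable (fun z : Fin n → ℝ => ∑ i, (2 * d * c i) * z i) (μn n) :=
    integrable_finset_sum _ fun i _ => (int1 i).const_mul _
  have h12 : Integrable (fun z : Fin n → ℝ =>
      (∑ i, ∑ k, ∑ j, ∑ l, (C i j * C k l) * (z i * z j * z k * z l))
      + ∑ i, ∑ j, ∑ k, (2 * (C i j * c k)) * (z i * z j * z k)) (μn n) := h1.add h2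
  have h123 : Integrable (fun z : Fin n → ℝ =>
      ((∑ i, ∑ k, ∑ j, ∑ l, (C i j * C k l) * (z i * z j * z k * z l))
      + ∑ i, ∑ j, ∑ k, (2 * (C i j * c k)) * (z i * z j * z k))
      + ∑ i, ∑ j, ((c i * c j) + 2 * d * C i j) * (z i * z j)) (μn n) := h12.add h3
  have h1234 : Integrable (fun z : Fin n → ℝ =>
      (((∑ i, ∑ k, ∑ j, ∑ l, (C i j * C k l) * (z i * z j * z k * z l))
      + ∑ i, ∑ j, ∑ k, (2 * (C i j * c k)) * (z i * z j * z k))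
      + ∑ i, ∑ j, ((c i * c j) + 2 * d * C i j) * (z i * z j))
      + ∑ i, (2 * d * c i) * z i) (μn n) := h123.add h4
  rw [integral_add h1234 (integrable_const _), integral_add h123 h4, integral_add h12 h3,
    integral_add h1 h2]
  have e1 : ∫ z : Fin n → ℝ,
      ∑ i, ∑ k, ∑ j, ∑ l, (C i j * C k l) * (z i * z j * z k * z l) ∂(μn n)
      = (∑ i, C i i) ^ 2 + ∑ i, ∑ j, C i j * C i j + ∑ i, ∑ j, C i j * C j i := by
    rw [integral_finset_sum _ (fun i _ => integrable_finset_sum _ fun k _ =>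
      integrable_finset_sum _ fun j _ => integrable_finset_sum _ fun l _ =>
      (int4 i j k l).const_mul _)]
    have : ∀ i : Fin n, ∫ z : Fin n → ℝ,
        ∑ k, ∑ j, ∑ l, (C i j * C k l) * (z i * z j * z k * z l) ∂(μn n)
        = ∑ k, ∑ j, ∑ l, (C i j * C k l) *
          ((if i = j then (1:ℝ) else 0) * (if k = l then 1 else 0)
            + (if i = k then (1:ℝ) else 0) * (if j = l then 1 else 0)
            + (if i = l then (1:ℝ) else 0) * (if j = k then 1 else 0)) := by
      intro i
      rw [integral_finset_sum _ (fun k _ => integrable_finset_sum _ fun j _ =>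
        integrable_finset_sum _ fun l _ => (int4 i j k l).const_mul _)]
      refine Finset.sum_congr rfl fun k _ => ?_
      rw [integral_finset_sum _ (fun j _ => integrable_finset_sum _ fun l _ =>
        (int4 i j k l).const_mul _)]
      refine Finset.sum_congr rfl fun j _ => ?_
      rw [integral_finset_sum _ (fun l _ => (int4 i j k l).const_mul _)]
      refine Finset.sum_congr rfl fun l _ => ?_
      rw [integral_const_mul, mono4]
    rw [Finset.sum_congr rfl fun i _ => this i]
    simp only [mul_add, Finset.sum_add_distrib]
    congr 1
    · congr 1
      · simp only [mul_ite, ite_mul, mul_one, mul_zero, zero_mul, one_mul,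
          Finset.sum_ite_eq, Finset.sum_ite_eq', Finset.mem_univ, if_true,
          Finset.sum_ite_irrel, Finset.sum_const_zero]
        rw [sq, Finset.sum_mul_sum]
      · simp only [mul_ite, ite_mul, mul_one, mul_zero, zero_mul, one_mul,
          Finset.sum_ite_eq, Finset.sum_ite_eq', Finset.mem_univ, if_true,
          Finset.sum_ite_irrel, Finset.sum_const_zero]
    · simp only [mul_ite, ite_mul, mul_one, mul_zero, zero_mul, one_mul,
        Finset.sum_ite_eq, Finset.sum_ite_eq', Finset.mem_univ, if_true,
        Finset.sum_ite_irrel, Finset.sum_const_zero]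
  have e2 : ∫ z : Fin n → ℝ,
      ∑ i, ∑ j, ∑ k, (2 * (C i j * c k)) * (z i * z j * z k) ∂(μn n) = 0 := by
    rw [integral_finset_sum _ (fun i _ => integrable_finset_sum _ fun j _ =>
      integrable_finset_sum _ fun k _ => (int3 i j k).const_mul _)]
    refine Finset.sum_eq_zero fun i _ => ?_
    rw [integral_finset_sum _ (fun j _ => integrable_finset_sum _ fun k _ =>
      (int3 i j k).const_mul _)]
    refine Finset.sum_eq_zero fun j _ => ?_
    rw [integral_finset_sum _ (fun k _ => (int3 i j k).const_mul _)]
    refine Finset.sum_eq_zero fun k _ => ?_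
    rw [integral_const_mul, mono3, mul_zero]
  have e3 : ∫ z : Fin n → ℝ,
      ∑ i, ∑ j, ((c i * c j) + 2 * d * C i j) * (z i * z j) ∂(μn n)
      = ∑ i, (c i) ^ 2 + 2 * d * (∑ i, C i i) := by
    rw [integral_finset_sum _ (fun i _ => integrable_finset_sum _ fun j _ =>
      (int2 i j).const_mul _)]
    have : ∀ i : Fin n, ∫ z : Fin n → ℝ,
        ∑ j, ((c i * c j) + 2 * d * C i j) * (z i * z j) ∂(μn n)
        = (c i) ^ 2 + 2 * d * C i i := by
      intro i
      rw [integral_finset_sum _ (fun j _ => (int2 i j).const_mul _)]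
      simp only [integral_const_mul, mono2, mul_ite, mul_one, mul_zero,
        Finset.sum_ite_eq, Finset.mem_univ, if_true]
      ring
    rw [Finset.sum_congr rfl fun i _ => this i, Finset.sum_add_distrib, Finset.mul_sum]
  have e4 : ∫ z : Fin n → ℝ, ∑ i, (2 * d * c i) * z i ∂(μn n) = 0 := by
    rw [integral_finset_sum _ (fun i _ => (int1 i).const_mul _)]
    refine Finset.sum_eq_zero fun i _ => ?_
    rw [integral_const_mul, mono1, mul_zero]
  rw [e1, e2, e3, e4]
  simp only [integral_const, measure_univ, probReal_univ, ENNReal.toReal_one, smul_eq_mul, one_mul]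
  ring


end GradAux

open GradAux

/-- For second degree polynomials `f(x)=⟨Ax,x⟩+⟨a,x⟩+α` and
`g(x)=⟨Bx,x⟩+⟨b,x⟩+β` with `A`, `B` self-adjoint, and `Z` standard normal
in `ℝⁿ`, `‖∇f(Z) − ∇g(Z)‖₂ ≤ √2 ‖f(Z) − g(Z)‖₂`. -/
theorem gradient_L2_bound (n : ℕ) (A B : Matrix (Fin n) (Fin n) ℝ)
    (hA : A.IsSymm) (hB : B.IsSymm) (a b : Fin n → ℝ) (α β : ℝ) :
    Real.sqrt (∫ z, (∑ i, ((2 * ∑ j, A i j * z j) + a i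
          - ((2 * ∑ j, B i j * z j) + b i)) ^ 2)
        ∂(Measure.pi fun _ : Fin n => gaussianReal 0 1))
      ≤ Real.sqrt 2 *
        Real.sqrt (∫ z, (((∑ i, ∑ j, A i j * z i * z j) + (∑ i, a i * z i) + α)
            - ((∑ i, ∑ j, B i j * z i * z j) + (∑ i, b i * z i) + β)) ^ 2
          ∂(Measure.pi fun _ : Fin n => gaussianReal 0 1)) := by
  set C : Matrix (Fin n) (Fin n) ℝ := fun i j => A i j - B i j with hC
  set c : Fin n → ℝ := fun i => a i - b i with hc
  set d : ℝ := α - β with hd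
  -- rewrite the first integrand
  have hf1 : (fun z : Fin n → ℝ => ∑ i, ((2 * ∑ j, A i j * z j) + a i
      - ((2 * ∑ j, B i j * z j) + b i)) ^ 2)
      = fun z : Fin n → ℝ => ∑ i, (2 * ∑ j, C i j * z j + c i) ^ 2 := by
    funext z
    refine Finset.sum_congr rfl fun i _ => ?_
    have h : ∑ j, C i j * z j = ∑ j, A i j * z j - ∑ j, B i j * z j := by
      rw [← Finset.sum_sub_distrib]
      exact Finset.sum_congr rfl fun j _ => by rw [hC]; ring
    rw [h, hc]
    ring
  have hf2 : (fun z : Fin n → ℝ => (((∑ i, ∑ j, A i j * z i * z j) + (∑ i, a i * z i) + α)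
      - ((∑ i, ∑ j, B i j * z i * z j) + (∑ i, b i * z i) + β)) ^ 2)
      = fun z : Fin n → ℝ =>
        (∑ i, ∑ j, C i j * (z i * z j) + ∑ i, c i * z i + d) ^ 2 := by
    funext z
    have h1 : ∑ i, ∑ j, C i j * (z i * z j)
        = ∑ i, ∑ j, A i j * z i * z j - ∑ i, ∑ j, B i j * z i * z j := by
      rw [← Finset.sum_sub_distrib]
      refine Finset.sum_congr rfl fun i _ => ?_
      rw [← Finset.sum_sub_distrib]
      exact Finset.sum_congr rfl fun j _ => by rw [hC]; ring
    have h2 : ∑ i, c i * z i = ∑ i, a i * z i - ∑ i, b i * z i := by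
      rw [← Finset.sum_sub_distrib]
      exact Finset.sum_congr rfl fun i _ => by rw [hc]; ring
    rw [h1, h2, hd]
    ring
  rw [hf1, hf2]
  rw [← Real.sqrt_mul (by norm_num : (0:ℝ) ≤ 2)]
  apply Real.sqrt_le_sqrt
  have hI1 : ∫ z : Fin n → ℝ, ∑ i, (2 * ∑ j, C i j * z j + c i) ^ 2 ∂(μn n)
      = ∑ i, (4 * (∑ j, (C i j) ^ 2) + (c i) ^ 2) := by
    rw [integral_finset_sum _ (fun i _ => intA1 (fun j => C i j) (c i))]
    exact Finset.sum_congr rfl fun i _ => lemA1 _ _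
  have hCsymm : ∀ i j, C j i = C i j := by
    intro i j
    show A j i - B j i = A i j - B i j
    rw [Matrix.IsSymm.apply hA i j, Matrix.IsSymm.apply hB i j]
  have hI2 := lemB C c d
  have hsym : ∑ i, ∑ j, C i j * C j i = ∑ i, ∑ j, C i j * C i j :=
    Finset.sum_congr rfl fun i _ => Finset.sum_congr rfl fun j _ => by rw [hCsymm i j]
  rw [hI1, hI2, hsym]
  have hpt : ∑ i, (4 * (∑ j, (C i j) ^ 2) + (c i) ^ 2)
      = 4 * (∑ i, ∑ j, C i j * C i j) + ∑ i, (c i) ^ 2 := by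
    rw [Finset.sum_add_distrib, Finset.mul_sum]
    congr 1
    refine Finset.sum_congr rfl fun i _ => ?_
    rw [Finset.mul_sum, Finset.mul_sum]
    exact Finset.sum_congr rfl fun j _ => by ring
  rw [hpt]
  have hc2 : (0:ℝ) ≤ ∑ i, (c i) ^ 2 := Finset.sum_nonneg fun i _ => sq_nonneg _
  nlinarith [sq_nonneg (∑ i, C i i + d), hc2]
end

section
/- Let f(x) = ⟨Ax, x⟩ + ⟨a, x⟩ + α and g(x) = ⟨Bx, x⟩ + ⟨b, x⟩ + β with A, B self-adjoint, and let Z be a standard normal random vector in R^n. Then E[|f(Z) − g(Z)|^2] = 2‖A − B‖_HS^2 + (tr A − tr B + α − β)^2 + |a − b|^2. -/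
open MeasureTheory ProbabilityTheory

namespace DSMaux

open Real
open scoped NNReal

noncomputable def M (k : ℕ) : ℝ := ∫ x, x ^ k ∂(gaussianReal 0 1)

lemma gr_eq : gaussianReal 0 1 = volume.withDensity
    (fun x => ((gaussianPDFReal 0 1 x).toNNReal : ENNReal)) := by
  rw [gaussianReal_of_var_ne_zero 0 one_ne_zero]; rfl

lemma pdf_eq (x : ℝ) : gaussianPDFReal 0 1 x = (√(2*π))⁻¹ * rexp (-x^2/2) := by
  simp [gaussianPDFReal]

lemma integrable_pow_gaussian (k : ℕ) :
    Integrable (fun x => x ^ k) (gaussianReal 0 1) := by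
  rw [gr_eq, integrable_withDensity_iff_integrable_smul
    ((measurable_gaussianPDFReal 0 1).real_toNNReal)]
  have h : (fun x : ℝ => (gaussianPDFReal 0 1 x).toNNReal • x ^ k)
      = fun x => (√(2*π))⁻¹ * (x ^ (k:ℝ) * rexp (-(1/2) * x^2)) := by
    funext x
    rw [NNReal.smul_def, Real.coe_toNNReal _ (gaussianPDFReal_nonneg _ _ _), pdf_eq,
      Real.rpow_natCast]
    simp only [smul_eq_mul]
    ring_nf
  rw [h]
  exact (integrable_rpow_mul_exp_neg_mul_sq (by norm_num)
    (by exact_mod_cast neg_one_lt_zero.trans_le (Nat.cast_nonneg k))).const_mul _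

lemma M_eq (k : ℕ) : M k = (√(2*π))⁻¹ * ∫ x, x ^ k * rexp (-x^2/2) := by
  rw [M, gr_eq, integral_withDensity_eq_integral_smul
    ((measurable_gaussianPDFReal 0 1).real_toNNReal)]
  rw [← integral_const_mul]
  congr 1; funext x
  rw [NNReal.smul_def, Real.coe_toNNReal _ (gaussianPDFReal_nonneg _ _ _), pdf_eq]
  simp only [smul_eq_mul]
  ring

lemma I0 : ∫ x : ℝ, rexp (-x^2/2) = √(2*π) := by
  have h : ∀ x : ℝ, -x^2/2 = -((1:ℝ)/2) * x^2 := fun x => by ring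
  simp_rw [h]
  rw [integral_gaussian]
  congr 1
  rw [div_div_eq_mul_div]
  ring

lemma Iodd (k : ℕ) (hk : Odd k) : ∫ x : ℝ, x ^ k * rexp (-x^2/2) = 0 := by
  have h := integral_neg_eq_self (fun x : ℝ => x ^ k * rexp (-x^2/2)) volume
  simp only [hk.neg_pow, neg_sq, neg_mul] at h
  rw [integral_neg] at h
  linarith

lemma Ieven (k : ℕ) (hk : Even k) : ∫ x : ℝ, x ^ k * rexp (-x^2/2)
    = 2 * ∫ x in Set.Ioi (0:ℝ), x ^ k * rexp (-x^2/2) := by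
  rw [← integral_comp_abs (f := fun x => x ^ k * rexp (-x^2/2))]
  congr 1; funext x
  rw [hk.pow_abs, sq_abs]

lemma IoiVal (q : ℕ) : ∫ x in Set.Ioi (0:ℝ), x ^ q * rexp (-x^2/2)
    = ((1:ℝ)/2) ^ (-((q:ℝ)+1)/2) * (1/2) * Gamma (((q:ℝ)+1)/2) := by
  have h := integral_rpow_mul_exp_neg_mul_rpow (p := 2) (q := (q:ℝ)) (b := 1/2)
    (by norm_num) (by exact_mod_cast neg_one_lt_zero.trans_le (Nat.cast_nonneg q)) (by norm_num)
  rw [← h]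
  refine setIntegral_congr_fun measurableSet_Ioi (fun x hx => ?_)
  rw [Real.rpow_natCast]
  norm_num
  left
  ring

lemma M0 : M 0 = 1 := by
  rw [M]
  simp

lemma M1 : M 1 = 0 := by rw [M_eq, Iodd 1 odd_one, mul_zero]
lemma M3 : M 3 = 0 := by rw [M_eq, Iodd 3 ⟨1, by norm_num⟩, mul_zero]

lemma half_rpow (y : ℝ) : ((1:ℝ)/2) ^ (-y) = (2:ℝ) ^ y := by
  rw [one_div, Real.inv_rpow (by norm_num), Real.rpow_neg (by norm_num), inv_inv]

lemma r32 : (2:ℝ) ^ ((3:ℝ)/2) = 2 * √2 := by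
  rw [show ((3:ℝ)/2) = 1 + 1/2 by norm_num, Real.rpow_add two_pos, Real.rpow_one,
    ← Real.sqrt_eq_rpow]

lemma r52 : (2:ℝ) ^ ((5:ℝ)/2) = 4 * √2 := by
  rw [show ((5:ℝ)/2) = 2 + 1/2 by norm_num, Real.rpow_add two_pos, ← Real.sqrt_eq_rpow,
    show (2:ℝ) ^ (2:ℝ) = 4 by rw [show (2:ℝ) = ((2:ℕ):ℝ) by norm_num, Real.rpow_natCast]; norm_num]

lemma M2 : M 2 = 1 := by
  rw [M_eq, Ieven 2 even_two, IoiVal 2,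
    show (-(((2:ℕ):ℝ)+1)/2) = -((3:ℝ)/2) from by norm_num,
    show ((((2:ℕ):ℝ))+1)/2 = 1/2 + 1 from by norm_num,
    Real.Gamma_add_one (by norm_num), Real.Gamma_one_half_eq,
    half_rpow, r32, Real.sqrt_mul (by norm_num : (0:ℝ) ≤ 2)]
  have h2 : (√2:ℝ) ≠ 0 := by positivity
  have hp : (√π:ℝ) ≠ 0 := by positivity
  field_simp

lemma M4 : M 4 = 3 := by
  rw [M_eq, Ieven 4 ⟨2, rfl⟩, IoiVal 4,
    show (-(((4:ℕ):ℝ)+1)/2) = -((5:ℝ)/2) from by norm_num,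
    show ((((4:ℕ):ℝ))+1)/2 = 1/2 + 1 + 1 from by norm_num,
    Real.Gamma_add_one (by norm_num), Real.Gamma_add_one (by norm_num),
    Real.Gamma_one_half_eq,
    half_rpow, r52, Real.sqrt_mul (by norm_num : (0:ℝ) ≤ 2)]
  have h2 : (√2:ℝ) ≠ 0 := by positivity
  have hp : (√π:ℝ) ≠ 0 := by positivity
  field_simp
  ring

variable {n : ℕ}

lemma integrable_monomial (k : Fin n → ℕ) :
    Integrable (fun z : Fin n → ℝ => ∏ m, z m ^ k m)
      (Measure.pi fun _ : Fin n => gaussianReal 0 1) := by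
  letI : MeasureSpace ℝ := ⟨gaussianReal 0 1⟩
  haveI : SigmaFinite (volume : Measure ℝ) :=
    inferInstanceAs (SigmaFinite (gaussianReal 0 1))
  exact MeasureTheory.Integrable.fintype_prod (𝕜 := ℝ) (f := fun m (x : ℝ) => x ^ k m)
    (fun m => integrable_pow_gaussian (k m))

lemma integral_monomial (k : Fin n → ℕ) :
    ∫ z, ∏ m, z m ^ k m ∂(Measure.pi fun _ : Fin n => gaussianReal 0 1)
      = ∏ m, M (k m) := by
  letI : MeasureSpace ℝ := ⟨gaussianReal 0 1⟩
  haveI : SigmaFinite (volume : Measure ℝ) :=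
    inferInstanceAs (SigmaFinite (gaussianReal 0 1))
  exact MeasureTheory.integral_fintype_prod_eq_prod (fun m (x : ℝ) => x ^ k m)

def e (i m : Fin n) : ℕ := if m = i then 1 else 0

lemma prod_pow_e (z : Fin n → ℝ) (i : Fin n) : (∏ m, z m ^ e i m) = z i := by
  simp [e, pow_ite, Finset.prod_ite_eq']

-- monomial rewriting lemmas
lemma mono1 (z : Fin n → ℝ) (i : Fin n) :
    (∏ m, z m ^ e i m) = z i := prod_pow_e z i
lemma mono2 (z : Fin n → ℝ) (i j : Fin n) :
    (∏ m, z m ^ (e i m + e j m)) = z i * z j := by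
  simp [pow_add, Finset.prod_mul_distrib, prod_pow_e]
lemma mono3 (z : Fin n → ℝ) (i j k : Fin n) :
    (∏ m, z m ^ (e i m + e j m + e k m)) = z i * z j * z k := by
  simp [pow_add, Finset.prod_mul_distrib, prod_pow_e]
lemma mono4 (z : Fin n → ℝ) (i j k l : Fin n) :
    (∏ m, z m ^ (e i m + e j m + e k m + e l m)) = z i * z j * z k * z l := by
  simp [pow_add, Finset.prod_mul_distrib, prod_pow_e]

lemma integrable_z1 (i : Fin n) :
    Integrable (fun z : Fin n → ℝ => z i) (Measure.pi fun _ : Fin n => gaussianReal 0 1) := by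
  simpa [mono1] using integrable_monomial (e i)
lemma integrable_z2 (i j : Fin n) :
    Integrable (fun z : Fin n → ℝ => z i * z j)
      (Measure.pi fun _ : Fin n => gaussianReal 0 1) := by
  simpa [mono2] using integrable_monomial (fun m => e i m + e j m)
lemma integrable_z3 (i j k : Fin n) :
    Integrable (fun z : Fin n → ℝ => z i * z j * z k)
      (Measure.pi fun _ : Fin n => gaussianReal 0 1) := by
  simpa [mono3] using integrable_monomial (fun m => e i m + e j m + e k m)
lemma integrable_z4 (i j k l : Fin n) :
    Integrable (fun z : Fin n → ℝ => z i * z j * z k * z l)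
      (Measure.pi fun _ : Fin n => gaussianReal 0 1) := by
  simpa [mono4] using integrable_monomial (fun m => e i m + e j m + e k m + e l m)

local notation "μpi" => (Measure.pi fun _ : Fin n => gaussianReal 0 1)

lemma mom1 (i : Fin n) : ∫ z, z i ∂μpi = 0 := by
  rw [show (fun z : Fin n → ℝ => z i) = fun z => ∏ m, z m ^ e i m from
    funext fun z => (mono1 z i).symm, integral_monomial]
  exact Finset.prod_eq_zero (Finset.mem_univ i) (by simp [e, M1])

lemma mom2 (i j : Fin n) : ∫ z, z i * z j ∂μpi = if i = j then 1 else 0 := by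
  rw [show (fun z : Fin n → ℝ => z i * z j) = fun z => ∏ m, z m ^ (e i m + e j m) from
    funext fun z => (mono2 z i j).symm, integral_monomial]
  by_cases hij : i = j
  · subst hij
    rw [if_pos rfl]
    exact Finset.prod_eq_one fun m _ => by
      by_cases hm : m = i <;> simp [e, hm, M2, M0]
  · rw [if_neg hij]
    exact Finset.prod_eq_zero (Finset.mem_univ i) (by simp [e, hij, M1])

lemma mom3 (i j k : Fin n) : ∫ z, z i * z j * z k ∂μpi = 0 := by
  rw [show (fun z : Fin n → ℝ => z i * z j * z k)
      = fun z => ∏ m, z m ^ (e i m + e j m + e k m) from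
    funext fun z => (mono3 z i j k).symm, integral_monomial]
  by_cases hij : i = j
  · subst hij
    by_cases hik : i = k
    · subst hik
      exact Finset.prod_eq_zero (Finset.mem_univ i) (by simp [e, M3])
    · exact Finset.prod_eq_zero (Finset.mem_univ k) (by simp [e, Ne.symm hik, M1])
  · by_cases hik : i = k
    · subst hik
      exact Finset.prod_eq_zero (Finset.mem_univ j) (by simp [e, hij, Ne.symm hij, M1])
    · by_cases hjk : j = k
      · subst hjk
        exact Finset.prod_eq_zero (Finset.mem_univ i) (by simp [e, hij, hik, M1])
      · exact Finset.prod_eq_zero (Finset.mem_univ i) (by simp [e, hij, hik, M1])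

lemma mom4 (i j k l : Fin n) : ∫ z, z i * z j * z k * z l ∂μpi
    = (if i = j ∧ k = l then 1 else 0) + (if i = k ∧ j = l then 1 else 0)
      + (if i = l ∧ j = k then 1 else 0) := by
  rw [show (fun z : Fin n → ℝ => z i * z j * z k * z l)
      = fun z => ∏ m, z m ^ (e i m + e j m + e k m + e l m) from
    funext fun z => (mono4 z i j k l).symm, integral_monomial]
  by_cases hij : i = j
  · subst hij
    by_cases hkl : k = l
    · subst hkl
      by_cases hik : i = k
      · subst hik
        rw [Finset.prod_eq_single i (fun m _ hm => by simp [e, hm, M0])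
          (fun h => absurd (Finset.mem_univ i) h)]
        simp [e, M4]
        norm_num
      · rw [Finset.prod_eq_one fun m _ => by
          by_cases hm : m = i
          · simp [e, hm, hik, M2]
          · by_cases hm' : m = k <;> simp [e, hm, hm', Ne.symm hik, M2, M0]]
        simp [hik]
    · rw [if_neg (fun h => hkl h.2), if_neg (fun h : i = k ∧ i = l => hkl (h.1.symm.trans h.2)),
        if_neg (fun h : i = l ∧ i = k => hkl (h.2.symm.trans h.1))]
      simp only [add_zero]
      refine Finset.prod_eq_zero (Finset.mem_univ k) ?_
      by_cases hki : k = i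
      · have h2 : ¬ i = l := fun h => hkl (hki.trans h)
        simp [e, hki, h2, M3]
      · simp [e, hki, fun h : k = l => hkl h, M1]
  · by_cases hkl : k = l
    · subst hkl
      rw [if_neg (fun h => hij h.1), if_neg (fun h : i = k ∧ j = k => hij (h.1.trans h.2.symm))]
      simp only [add_zero]
      refine Finset.prod_eq_zero (Finset.mem_univ j) ?_
      by_cases hjk : j = k
      · have h2 : ¬ k = i := fun h => hij ((hjk.trans h).symm)
        simp [e, Ne.symm hij, hjk, h2, M3]
      · simp [e, Ne.symm hij, hjk, M1]
    · by_cases hik : i = k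
      · subst hik
        by_cases hjl : j = l
        · subst hjl
          rw [if_neg (fun h => hij h.1), if_pos ⟨rfl, rfl⟩,
            if_neg (fun h : i = j ∧ j = i => hij h.1)]
          simp only [add_zero, zero_add]
          rw [Finset.prod_eq_one fun m _ => by
            by_cases hm : m = i
            · simp [e, hm, fun h : i = j => hij h, M2]
            · by_cases hm' : m = j <;> simp [e, hm, hm', Ne.symm hij, M2, M0]]
        · rw [if_neg (fun h => hij h.1), if_neg (fun h => hjl h.2),
            if_neg (fun h : i = l ∧ j = i => hij h.2.symm)]
          simp only [add_zero]
          refine Finset.prod_eq_zero (Finset.mem_univ j) ?_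
          simp [e, Ne.symm hij, fun h : j = l => hjl h, M1]
      · by_cases hil : i = l
        · subst hil
          by_cases hjk : j = k
          · subst hjk
            rw [if_neg (fun h : i = j ∧ j = i => hij h.1), if_pos ⟨rfl, rfl⟩]
            simp only [add_zero, zero_add]
            rw [Finset.prod_eq_one fun m _ => by
              by_cases hm : m = i
              · simp [e, hm, fun h : i = j => hij h, M2]
              · by_cases hm' : m = j <;> simp [e, hm, hm', Ne.symm hij, M2, M0]]
          · rw [if_neg (fun h => hij h.1), if_neg (fun h => hik h.1),
              if_neg (fun h => hjk h.2)]
            simp only [add_zero]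
            refine Finset.prod_eq_zero (Finset.mem_univ j) ?_
            simp [e, Ne.symm hij, fun h : j = k => hjk h, fun h : j = i => hij h.symm, M1]
        · rw [if_neg (fun h => hij h.1), if_neg (fun h => hik h.1),
            if_neg (fun h => hil h.1)]
          simp only [add_zero]
          refine Finset.prod_eq_zero (Finset.mem_univ i) ?_
          simp [e, hij, hik, hil, M1]

lemma sumA (C : Fin n → Fin n → ℝ) :
    ∑ i, ∑ j, ∑ k, ∑ l, (C i j * C k l) * (if i = j ∧ k = l then (1:ℝ) else 0)
      = (∑ i, C i i) * (∑ i, C i i) := by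
  rw [Finset.sum_mul_sum]
  simp [ite_and, mul_ite, mul_one, mul_zero, Finset.sum_ite_eq]

lemma sumB (C : Fin n → Fin n → ℝ) :
    ∑ i, ∑ j, ∑ k, ∑ l, (C i j * C k l) * (if i = k ∧ j = l then (1:ℝ) else 0)
      = ∑ i, ∑ j, C i j * C i j := by
  simp [ite_and, mul_ite, mul_one, mul_zero, Finset.sum_ite_eq]

lemma sumD (C : Fin n → Fin n → ℝ) :
    ∑ i, ∑ j, ∑ k, ∑ l, (C i j * C k l) * (if i = l ∧ j = k then (1:ℝ) else 0)
      = ∑ i, ∑ j, C i j * C j i := by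
  simp [ite_and, mul_ite, mul_one, mul_zero, Finset.sum_ite_eq]

lemma sumLL (c : Fin n → ℝ) :
    ∑ i, ∑ j, (c i * c j) * (if i = j then (1:ℝ) else 0) = ∑ i, c i * c i := by
  simp [mul_ite, mul_one, mul_zero, Finset.sum_ite_eq]

lemma sumQdiag (C : Fin n → Fin n → ℝ) :
    ∑ i, ∑ j, C i j * (if i = j then (1:ℝ) else 0) = ∑ i, C i i := by
  simp [mul_ite, mul_one, mul_zero, Finset.sum_ite_eq]

lemma key (C : Fin n → Fin n → ℝ) (hC : ∀ i j, C j i = C i j) (c : Fin n → ℝ) (g : ℝ) :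
    ∫ z, ((∑ i, ∑ j, C i j * z i * z j) + (∑ i, c i * z i) + g)^2 ∂μpi
      = 2 * (∑ i, ∑ j, C i j ^ 2) + ((∑ i, C i i) + g)^2 + ∑ i, c i ^ 2 := by
  -- canonical chunks
  set QQ : (Fin n → ℝ) → ℝ := fun z => ∑ p : (Fin n × Fin n) × Fin n × Fin n,
    (C p.1.1 p.1.2 * C p.2.1 p.2.2) * (z p.1.1 * z p.1.2 * z p.2.1 * z p.2.2) with hQQ
  set LL : (Fin n → ℝ) → ℝ := fun z => ∑ p : Fin n × Fin n,
    (c p.1 * c p.2) * (z p.1 * z p.2) with hLL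
  set QL : (Fin n → ℝ) → ℝ := fun z => ∑ p : (Fin n × Fin n) × Fin n,
    (C p.1.1 p.1.2 * c p.2) * (z p.1.1 * z p.1.2 * z p.2) with hQL
  set Q1 : (Fin n → ℝ) → ℝ := fun z => ∑ q : Fin n × Fin n,
    (C q.1 q.2) * (z q.1 * z q.2) with hQ1
  set L1 : (Fin n → ℝ) → ℝ := fun z => ∑ i, c i * z i with hL1
  have hpt : ∀ z : Fin n → ℝ,
      ((∑ i, ∑ j, C i j * z i * z j) + (∑ i, c i * z i) + g)^2
        = QQ z + LL z + 2 * QL z + (2*g) * Q1 z + (2*g) * L1 z + g^2 := by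
    intro z
    have hQz : (∑ q : Fin n × Fin n, C q.1 q.2 * z q.1 * z q.2)
        = ∑ i, ∑ j, C i j * z i * z j :=
      Fintype.sum_prod_type (fun q : Fin n × Fin n => C q.1 q.2 * z q.1 * z q.2)
    have e1 : QQ z = (∑ q : Fin n × Fin n, C q.1 q.2 * z q.1 * z q.2)
        * (∑ q : Fin n × Fin n, C q.1 q.2 * z q.1 * z q.2) := by
      simp only [hQQ]
      rw [Fintype.sum_prod_type, Finset.sum_mul_sum]
      exact Finset.sum_congr rfl fun q _ => Finset.sum_congr rfl fun r _ => by
        dsimp only; ring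
    have e2 : LL z = (∑ i, c i * z i) * (∑ i, c i * z i) := by
      simp only [hLL]
      rw [Fintype.sum_prod_type, Finset.sum_mul_sum]
      exact Finset.sum_congr rfl fun q _ => Finset.sum_congr rfl fun r _ => by
        dsimp only; ring
    have e3 : QL z = (∑ q : Fin n × Fin n, C q.1 q.2 * z q.1 * z q.2)
        * (∑ i, c i * z i) := by
      simp only [hQL]
      rw [Fintype.sum_prod_type, Finset.sum_mul_sum]
      exact Finset.sum_congr rfl fun q _ => Finset.sum_congr rfl fun r _ => by
        dsimp only; ring
    have e4 : Q1 z = ∑ q : Fin n × Fin n, C q.1 q.2 * z q.1 * z q.2 :=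
      Finset.sum_congr rfl fun q _ => by ring
    rw [← hQz, e1, e2, e3, e4, hL1]
    ring
  rw [integral_congr_ae (Filter.Eventually.of_forall hpt)]
  have hIQQ : Integrable QQ μpi := by
    simp only [hQQ]
    exact integrable_finset_sum _ fun p _ => (integrable_z4 _ _ _ _).const_mul _
  have hILL : Integrable LL μpi := by
    simp only [hLL]
    exact integrable_finset_sum _ fun p _ => (integrable_z2 _ _).const_mul _
  have hIQL : Integrable QL μpi := by
    simp only [hQL]
    exact integrable_finset_sum _ fun p _ => (integrable_z3 _ _ _).const_mul _
  have hIQ1 : Integrable Q1 μpi := by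
    simp only [hQ1]
    exact integrable_finset_sum _ fun q _ => (integrable_z2 _ _).const_mul _
  have hIL1 : Integrable L1 μpi := by
    simp only [hL1]
    exact integrable_finset_sum _ fun i _ => (integrable_z1 _).const_mul _
  have IQQ : ∫ z, QQ z ∂μpi = (∑ i, C i i) * (∑ i, C i i)
      + (∑ i, ∑ j, C i j * C i j) + (∑ i, ∑ j, C i j * C j i) := by
    simp only [hQQ]
    rw [integral_finset_sum _ fun p _ => (integrable_z4 _ _ _ _).const_mul _]
    simp_rw [integral_const_mul, mom4]
    simp only [Fintype.sum_prod_type]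
    simp only [mul_add, Finset.sum_add_distrib]
    rw [sumA C, sumB C, sumD C]
  have ILL : ∫ z, LL z ∂μpi = ∑ i, c i * c i := by
    simp only [hLL]
    rw [integral_finset_sum _ fun p _ => (integrable_z2 _ _).const_mul _]
    simp_rw [integral_const_mul, mom2]
    simp only [Fintype.sum_prod_type]
    rw [sumLL c]
  have IQL : ∫ z, QL z ∂μpi = 0 := by
    simp only [hQL]
    rw [integral_finset_sum _ fun p _ => (integrable_z3 _ _ _).const_mul _]
    simp_rw [integral_const_mul, mom3]
    simp
  have IQ1 : ∫ z, Q1 z ∂μpi = ∑ i, C i i := by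
    simp only [hQ1]
    rw [integral_finset_sum _ fun q _ => (integrable_z2 _ _).const_mul _]
    simp_rw [integral_const_mul, mom2]
    simp only [Fintype.sum_prod_type]
    rw [sumQdiag C]
  have IL1 : ∫ z, L1 z ∂μpi = 0 := by
    simp only [hL1]
    rw [integral_finset_sum _ fun i _ => (integrable_z1 _).const_mul _]
    simp_rw [integral_const_mul, mom1]
    simp
  haveI : IsProbabilityMeasure (Measure.pi fun _ : Fin n => gaussianReal 0 1) :=
    inferInstance
  have A1 : Integrable (fun z : Fin n → ℝ => QQ z + LL z) μpi := hIQQ.add hILL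
  have A2 : Integrable (fun z : Fin n → ℝ => QQ z + LL z + 2 * QL z) μpi :=
    A1.add (hIQL.const_mul 2)
  have A3 : Integrable (fun z : Fin n → ℝ => QQ z + LL z + 2 * QL z + 2*g * Q1 z) μpi :=
    A2.add (hIQ1.const_mul (2*g))
  have A4 : Integrable
      (fun z : Fin n → ℝ => QQ z + LL z + 2 * QL z + 2*g * Q1 z + 2*g * L1 z) μpi :=
    A3.add (hIL1.const_mul (2*g))
  rw [integral_add A4 (integrable_const _),
    integral_add A3 (hIL1.const_mul (2*g)),
    integral_add A2 (hIQ1.const_mul (2*g)),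
    integral_add A1 (hIQL.const_mul 2),
    integral_add hIQQ hILL,
    integral_const_mul, integral_const_mul, integral_const_mul,
    IQQ, ILL, IQL, IQ1, IL1, integral_const]
  have hsym : (∑ i, ∑ j, C i j * C j i) = ∑ i, ∑ j, C i j * C i j :=
    Finset.sum_congr rfl fun i _ => Finset.sum_congr rfl fun j _ => by rw [hC i j]
  have hsq : (∑ i, ∑ j, C i j * C i j) = ∑ i, ∑ j, C i j ^ 2 :=
    Finset.sum_congr rfl fun i _ => Finset.sum_congr rfl fun j _ => (sq (C i j)).symm
  have hcsq : (∑ i, c i * c i) = ∑ i, c i ^ 2 :=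
    Finset.sum_congr rfl fun i _ => (sq (c i)).symm
  rw [hsym, hsq, hcsq]
  simp [measure_univ]
  ring

end DSMaux

open DSMaux in
/-- For `f(x)=⟨Ax,x⟩+⟨a,x⟩+α`, `g(x)=⟨Bx,x⟩+⟨b,x⟩+β` with `A`, `B`
self-adjoint and `Z` standard normal in `ℝⁿ`,
`E[|f(Z)−g(Z)|²] = 2‖A−B‖²_HS + (tr A − tr B + α − β)² + |a−b|²`. -/
theorem difference_second_moment (n : ℕ) (A B : Matrix (Fin n) (Fin n) ℝ)
    (hA : A.IsSymm) (hB : B.IsSymm) (a b : Fin n → ℝ) (α β : ℝ) :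
    (∫ z, (((∑ i, ∑ j, A i j * z i * z j) + (∑ i, a i * z i) + α)
          - ((∑ i, ∑ j, B i j * z i * z j) + (∑ i, b i * z i) + β)) ^ 2
        ∂(Measure.pi fun _ : Fin n => gaussianReal 0 1))
      = 2 * (∑ i, ∑ j, (A i j - B i j) ^ 2)
        + (A.trace - B.trace + α - β) ^ 2 + ∑ i, (a i - b i) ^ 2 := by
  have hpt : ∀ z : Fin n → ℝ,
      (((∑ i, ∑ j, A i j * z i * z j) + (∑ i, a i * z i) + α)
          - ((∑ i, ∑ j, B i j * z i * z j) + (∑ i, b i * z i) + β)) ^ 2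
      = ((∑ i, ∑ j, (fun i j => A i j - B i j) i j * z i * z j)
          + (∑ i, (fun i => a i - b i) i * z i) + (α - β)) ^ 2 := by
    intro z
    simp only [sub_mul, Finset.sum_sub_distrib]
    ring
  rw [integral_congr_ae (Filter.Eventually.of_forall hpt),
    key (fun i j => A i j - B i j)
      (fun i j => by simp only [hA.apply, hB.apply]) (fun i => a i - b i) (α - β)]
  simp only [Matrix.trace, Matrix.diag, Finset.sum_sub_distrib]
  ring
end

section
/- Let ℓ_1, ℓ_2 be affine functions on R^2 and let X be a standard normal random vector in R^2. Then sup_{x ∈ R^2} [√(|ℓ_1(x)|² + |ℓ_2(x)|²) e^{−|x|²/4}] ≤ √3 · (E[|ℓ_1(X)|² + |ℓ_2(X)|²])^{1/2}. -/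
open MeasureTheory ProbabilityTheory

open Real

noncomputable def gpdf : ℝ → NNReal := fun x => (gaussianPDFReal 0 1 x).toNNReal

lemma gpdf_meas : Measurable gpdf := (measurable_gaussianPDFReal 0 1).real_toNNReal

lemma gpdf_coe (x : ℝ) :
    (gpdf x : ℝ) = (Real.sqrt (2 * π))⁻¹ * Real.exp (-(1/2) * x ^ 2) := by
  rw [gpdf, Real.coe_toNNReal _ (gaussianPDFReal_nonneg 0 1 x), gaussianPDFReal]
  norm_num
  ring_nf
  tauto

lemma gauss_eq : gaussianReal 0 1 = volume.withDensity fun x => (gpdf x : ENNReal) := by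
  rw [gaussianReal_of_var_ne_zero _ one_ne_zero]
  rfl

lemma integral_gauss (g : ℝ → ℝ) :
    ∫ x, g x ∂(gaussianReal 0 1) = ∫ x, (gpdf x : ℝ) * g x := by
  rw [gauss_eq, integral_withDensity_eq_integral_smul gpdf_meas]
  simp [NNReal.smul_def]

lemma integrable_gauss_iff (g : ℝ → ℝ) :
    Integrable g (gaussianReal 0 1) ↔ Integrable (fun x => (gpdf x : ℝ) * g x) volume := by
  have h := integrable_withDensity_iff_integrable_smul (μ := (volume : Measure ℝ)) gpdf_meas (g := g)
  simp only [NNReal.smul_def, smul_eq_mul] at h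
  rw [gauss_eq, ← h]

-- base integrability
lemma int_g0 : Integrable (fun x : ℝ => (gpdf x : ℝ)) volume := by
  simp_rw [gpdf_coe]
  exact (integrable_exp_neg_mul_sq one_half_pos).const_mul _

lemma int_g1 : Integrable (fun x : ℝ => (gpdf x : ℝ) * x) volume := by
  have h := (integrable_mul_exp_neg_mul_sq (b := 1/2) one_half_pos).const_mul (Real.sqrt (2 * π))⁻¹
  have : (fun x : ℝ => (gpdf x : ℝ) * x)
      = fun x => (Real.sqrt (2 * π))⁻¹ * (x * Real.exp (-(1/2) * x ^ 2)) := by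
    funext x; rw [gpdf_coe]; ring
  rw [this]; exact h

lemma int_g2 : Integrable (fun x : ℝ => (gpdf x : ℝ) * x ^ 2) volume := by
  have h := (integrable_rpow_mul_exp_neg_mul_sq (b := 1/2) one_half_pos
      (s := 2) (by norm_num)).const_mul (Real.sqrt (2 * π))⁻¹
  have : (fun x : ℝ => (gpdf x : ℝ) * x ^ 2)
      = fun x => (Real.sqrt (2 * π))⁻¹ * (x ^ (2 : ℝ) * Real.exp (-(1/2) * x ^ 2)) := by
    funext x
    rw [gpdf_coe, show (2:ℝ) = ((2:ℕ):ℝ) by norm_num, Real.rpow_natCast]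
    ring
  rw [this]; exact h

-- integral values
lemma val_g0 : ∫ x, (gpdf x : ℝ) = 1 := by
  have := integral_gaussianPDFReal_eq_one 0 one_ne_zero
  rw [← this]
  congr 1; funext x
  rw [gpdf, Real.coe_toNNReal _ (gaussianPDFReal_nonneg 0 1 x)]

lemma val_g1 : ∫ x, (gpdf x : ℝ) * x = 0 := by
  have heven : ∀ x : ℝ, (gpdf (-x) : ℝ) = (gpdf x : ℝ) := by
    intro x; rw [gpdf_coe, gpdf_coe]; ring_nf
  have h := integral_neg_eq_self (fun x : ℝ => (gpdf x : ℝ) * x) volume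
  have h2 : (∫ x : ℝ, (gpdf (-x) : ℝ) * (-x)) = ∫ x : ℝ, -((gpdf x : ℝ) * x) := by
    congr 1; funext x; rw [heven]; ring
  rw [h2, integral_neg] at h
  linarith

lemma val_g2 : ∫ x, (gpdf x : ℝ) * x ^ 2 = 1 := by
  have hIoi : ∫ x in Set.Ioi (0:ℝ), x ^ 2 * Real.exp (-(1/2) * x ^ 2)
      = ((1:ℝ)/2) ^ (-((2:ℝ) + 1) / 2) * (1 / 2) * Real.Gamma (((2:ℝ) + 1) / 2) := by
    rw [← integral_rpow_mul_exp_neg_mul_rpow (p := 2) (q := 2) (b := 1/2)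
      (by norm_num) (by norm_num) (by norm_num)]
    refine setIntegral_congr_fun measurableSet_Ioi (fun x _ => ?_)
    rw [show (2:ℝ) = ((2:ℕ):ℝ) by norm_num, Real.rpow_natCast]
  have hGamma : Real.Gamma (((2:ℝ) + 1) / 2) = Real.sqrt π / 2 := by
    rw [show ((2:ℝ) + 1) / 2 = 1/2 + 1 by norm_num, Real.Gamma_add_one (by norm_num),
      Real.Gamma_one_half_eq]
    ring
  have hpow : ((1:ℝ)/2) ^ (-((2:ℝ) + 1) / 2) = 2 * Real.sqrt 2 := by
    rw [show -((2:ℝ)+1)/2 = -(3/2) by norm_num, Real.rpow_neg (by norm_num),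
      show ((1:ℝ)/2) = 2⁻¹ by norm_num, Real.inv_rpow (by norm_num), inv_inv,
      show (3/2 : ℝ) = 1 + 1/2 by norm_num, Real.rpow_add (by norm_num), Real.rpow_one,
      ← Real.sqrt_eq_rpow]
  have hfull : ∫ x : ℝ, x ^ 2 * Real.exp (-(1/2) * x ^ 2) = Real.sqrt (2 * π) := by
    have habs : (fun x : ℝ => x ^ 2 * Real.exp (-(1/2) * x ^ 2))
        = fun x => |x| ^ 2 * Real.exp (-(1/2) * |x| ^ 2) := by
      funext x; rw [sq_abs]
    rw [habs, integral_comp_abs (f := fun x : ℝ => x ^ 2 * Real.exp (-(1/2) * x ^ 2)), hIoi,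
      hGamma, hpow, Real.sqrt_mul (by norm_num)]
    ring
  calc ∫ x, (gpdf x : ℝ) * x ^ 2
      = ∫ x, (Real.sqrt (2 * π))⁻¹ * (x ^ 2 * Real.exp (-(1/2) * x ^ 2)) := by
        congr 1; funext x; rw [gpdf_coe]; ring
    _ = (Real.sqrt (2 * π))⁻¹ * ∫ x, x ^ 2 * Real.exp (-(1/2) * x ^ 2) := by
        rw [integral_const_mul]
    _ = 1 := by
        rw [hfull, inv_mul_cancel₀]
        positivity

lemma key_int (p q : ℝ) : Integrable (fun x => (p * x + q) ^ 2) (gaussianReal 0 1) := by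
  rw [integrable_gauss_iff]
  have : (fun x : ℝ => (gpdf x : ℝ) * (p * x + q) ^ 2)
      = fun x => p ^ 2 * ((gpdf x : ℝ) * x ^ 2) + (2 * p * q) * ((gpdf x : ℝ) * x)
        + q ^ 2 * (gpdf x : ℝ) := by
    funext x; ring
  rw [this]
  exact ((int_g2.const_mul _).add (int_g1.const_mul _)).add (int_g0.const_mul _)

lemma key_val (p q : ℝ) : ∫ x, (p * x + q) ^ 2 ∂(gaussianReal 0 1) = p ^ 2 + q ^ 2 := by
  rw [integral_gauss]
  have : (fun x : ℝ => (gpdf x : ℝ) * (p * x + q) ^ 2)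
      = fun x => p ^ 2 * ((gpdf x : ℝ) * x ^ 2) + (2 * p * q) * ((gpdf x : ℝ) * x)
        + q ^ 2 * (gpdf x : ℝ) := by
    funext x; ring
  have h2 : Integrable (fun x : ℝ => p ^ 2 * ((gpdf x : ℝ) * x ^ 2)
      + 2 * p * q * ((gpdf x : ℝ) * x)) volume :=
    (int_g2.const_mul _).add (int_g1.const_mul _)
  rw [this, integral_add h2 (int_g0.const_mul _),
    integral_add (int_g2.const_mul _) (int_g1.const_mul _),
    integral_const_mul, integral_const_mul, integral_const_mul, val_g0, val_g1, val_g2]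
  ring

lemma int_gamma_id : Integrable (fun x : ℝ => x) (gaussianReal 0 1) := by
  rw [integrable_gauss_iff]; exact int_g1

lemma int_gamma_sq : Integrable (fun x : ℝ => x ^ 2) (gaussianReal 0 1) := by
  rw [integrable_gauss_iff]; exact int_g2

lemma prod_int (p q r : ℝ) :
    Integrable (fun z : ℝ × ℝ => (p * z.1 + q * z.2 + r) ^ 2)
      ((gaussianReal 0 1).prod (gaussianReal 0 1)) := by
  have t1 : Integrable (fun z : ℝ × ℝ => z.1 ^ 2 * (1:ℝ))
      ((gaussianReal 0 1).prod (gaussianReal 0 1)) :=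
    int_gamma_sq.mul_prod (integrable_const 1)
  have t2 : Integrable (fun z : ℝ × ℝ => (1:ℝ) * z.2 ^ 2)
      ((gaussianReal 0 1).prod (gaussianReal 0 1)) :=
    (integrable_const 1).mul_prod int_gamma_sq
  have t4 : Integrable (fun z : ℝ × ℝ => z.1 * z.2)
      ((gaussianReal 0 1).prod (gaussianReal 0 1)) :=
    int_gamma_id.mul_prod int_gamma_id
  have t5 : Integrable (fun z : ℝ × ℝ => z.1 * (1:ℝ))
      ((gaussianReal 0 1).prod (gaussianReal 0 1)) :=
    int_gamma_id.mul_prod (integrable_const 1)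
  have t6 : Integrable (fun z : ℝ × ℝ => (1:ℝ) * z.2)
      ((gaussianReal 0 1).prod (gaussianReal 0 1)) :=
    (integrable_const 1).mul_prod int_gamma_id
  have hsum : Integrable (fun z : ℝ × ℝ =>
      p ^ 2 * (z.1 ^ 2 * 1) + q ^ 2 * (1 * z.2 ^ 2) + r ^ 2 + 2 * p * q * (z.1 * z.2)
        + 2 * p * r * (z.1 * 1) + 2 * q * r * (1 * z.2))
      ((gaussianReal 0 1).prod (gaussianReal 0 1)) :=
    (((((t1.const_mul _).add (t2.const_mul _)).add (integrable_const _)).add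
      (t4.const_mul _)).add (t5.const_mul _)).add (t6.const_mul _)
  have hfun : (fun z : ℝ × ℝ => (p * z.1 + q * z.2 + r) ^ 2)
      = fun z : ℝ × ℝ =>
      p ^ 2 * (z.1 ^ 2 * 1) + q ^ 2 * (1 * z.2 ^ 2) + r ^ 2 + 2 * p * q * (z.1 * z.2)
        + 2 * p * r * (z.1 * 1) + 2 * q * r * (1 * z.2) := by
    funext z; ring
  rw [hfun]; exact hsum

lemma prod_val (p q r : ℝ) :
    ∫ z, (p * z.1 + q * z.2 + r) ^ 2 ∂((gaussianReal 0 1).prod (gaussianReal 0 1))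
      = p ^ 2 + q ^ 2 + r ^ 2 := by
  rw [integral_prod _ (prod_int p q r)]
  have hin : ∀ u : ℝ, ∫ v, (p * u + q * v + r) ^ 2 ∂(gaussianReal 0 1)
      = q ^ 2 + (p * u + r) ^ 2 := by
    intro u
    rw [show (fun v : ℝ => (p * u + q * v + r) ^ 2)
      = fun v : ℝ => (q * v + (p * u + r)) ^ 2 by funext v; ring]
    exact key_val q (p * u + r)
  have hout : ∫ u : ℝ, (∫ v, (p * u + q * v + r) ^ 2 ∂(gaussianReal 0 1))
      ∂(gaussianReal 0 1) = p ^ 2 + q ^ 2 + r ^ 2 := by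
    simp_rw [hin]
    rw [integral_add (integrable_const _) (key_int p r), integral_const, key_val p r]
    simp only [measure_univ, ENNReal.toReal_one, probReal_univ, smul_eq_mul, one_mul]
    ring
  simpa using hout

open MeasureTheory ProbabilityTheory

/-- For affine functions `ℓ₁(x) = a₁x₁ + a₂x₂ + b₁`,
`ℓ₂(x) = c₁x₁ + c₂x₂ + b₂` on `ℝ²` and `X` standard normal in `ℝ²`,
`sup_x √(ℓ₁(x)² + ℓ₂(x)²) e^{−|x|²/4} ≤ √3 (E[ℓ₁(X)² + ℓ₂(X)²])^{1/2}`. -/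
theorem sup_affine_pair_bound (a₁ a₂ b₁ c₁ c₂ b₂ : ℝ) :
    ∀ x : Fin 2 → ℝ,
      Real.sqrt ((a₁ * x 0 + a₂ * x 1 + b₁) ^ 2 + (c₁ * x 0 + c₂ * x 1 + b₂) ^ 2)
          * Real.exp (-(x 0 ^ 2 + x 1 ^ 2) / 4)
        ≤ Real.sqrt 3 *
          Real.sqrt (∫ y : Fin 2 → ℝ,
            ((a₁ * y 0 + a₂ * y 1 + b₁) ^ 2 + (c₁ * y 0 + c₂ * y 1 + b₂) ^ 2)
            ∂(Measure.pi fun _ : Fin 2 => gaussianReal 0 1)) := by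
  intro x
  have hG : ∫ z : ℝ × ℝ, ((a₁ * z.1 + a₂ * z.2 + b₁) ^ 2 + (c₁ * z.1 + c₂ * z.2 + b₂) ^ 2)
      ∂((gaussianReal 0 1).prod (gaussianReal 0 1))
      = (a₁ ^ 2 + a₂ ^ 2 + b₁ ^ 2) + (c₁ ^ 2 + c₂ ^ 2 + b₂ ^ 2) := by
    rw [integral_add (prod_int a₁ a₂ b₁) (prod_int c₁ c₂ b₂), prod_val, prod_val]
  have hpi : (∫ y : Fin 2 → ℝ,
      ((a₁ * y 0 + a₂ * y 1 + b₁) ^ 2 + (c₁ * y 0 + c₂ * y 1 + b₂) ^ 2)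
      ∂(Measure.pi fun _ : Fin 2 => gaussianReal 0 1))
      = (a₁ ^ 2 + a₂ ^ 2 + b₁ ^ 2) + (c₁ ^ 2 + c₂ ^ 2 + b₂ ^ 2) := by
    rw [← hG]
    exact (measurePreserving_piFinTwo (fun _ : Fin 2 => gaussianReal 0 1)).integral_comp
      (MeasurableEquiv.piFinTwo fun _ : Fin 2 => ℝ).measurableEmbedding
      (fun z : ℝ × ℝ => (a₁ * z.1 + a₂ * z.2 + b₁) ^ 2 + (c₁ * z.1 + c₂ * z.2 + b₂) ^ 2)
  rw [hpi]
  set S : ℝ := (a₁ ^ 2 + a₂ ^ 2 + b₁ ^ 2) + (c₁ ^ 2 + c₂ ^ 2 + b₂ ^ 2) with hSdef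
  set A : ℝ := (a₁ * x 0 + a₂ * x 1 + b₁) ^ 2 + (c₁ * x 0 + c₂ * x 1 + b₂) ^ 2 with hAdef
  set r : ℝ := x 0 ^ 2 + x 1 ^ 2 with hrdef
  have hr : 0 ≤ r := by positivity
  have hA : 0 ≤ A := by positivity
  have hS : 0 ≤ S := by positivity
  have hCS : A ≤ S * (r + 1) := by
    rw [hAdef, hSdef, hrdef]
    nlinarith [sq_nonneg (a₁ * x 1 - a₂ * x 0), sq_nonneg (a₁ - b₁ * x 0),
      sq_nonneg (a₂ - b₁ * x 1), sq_nonneg (c₁ * x 1 - c₂ * x 0),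
      sq_nonneg (c₁ - b₂ * x 0), sq_nonneg (c₂ - b₂ * x 1),
      sq_nonneg (a₁ * x 0 + a₂ * x 1), sq_nonneg (c₁ * x 0 + c₂ * x 1)]
  have hexp : (r + 1) * Real.exp (-r / 2) ≤ 3 := by
    have h1 := Real.add_one_le_exp (r / 2)
    have h4 : Real.exp (r / 2) * Real.exp (-r / 2) = 1 := by
      rw [← Real.exp_add, show r / 2 + -r / 2 = 0 by ring, Real.exp_zero]
    nlinarith [Real.exp_pos (-r / 2)]
  have hle : A * Real.exp (-r / 2) ≤ 3 * S := by
    have e1 : (0:ℝ) < Real.exp (-r / 2) := Real.exp_pos _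
    nlinarith [mul_le_mul_of_nonneg_right hCS e1.le, mul_le_mul_of_nonneg_left hexp hS]
  have hee : Real.exp (-r / 2) = (Real.exp (-r / 4)) ^ 2 := by
    rw [sq, ← Real.exp_add]; congr 1; ring
  have hL : Real.sqrt A * Real.exp (-r / 4) = Real.sqrt (A * Real.exp (-r / 2)) := by
    rw [hee, Real.sqrt_mul hA, Real.sqrt_sq (Real.exp_pos _).le]
  have hR : Real.sqrt 3 * Real.sqrt S = Real.sqrt (3 * S) :=
    (Real.sqrt_mul (by norm_num) S).symm
  rw [hL, hR]
  exact Real.sqrt_le_sqrt hle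
end

section
/- Let G be a polynomial of degree at most 2 on R^2 and let X be a standard normal random vector in R^2. Then sup_{x ∈ R^2} [|G(x)| e^{−|x|²/4}] ≤ 6√2 · (E[|G(X)|²])^{1/2}. -/
open MeasureTheory ProbabilityTheory

section AuxGaussian

open Real
open scoped NNReal ENNReal

set_option maxHeartbeats 1000000

noncomputable section


lemma aux_integrable_pow_gauss (n : ℕ) :
    Integrable (fun x : ℝ => x ^ n * Real.exp (-x ^ 2 / 2)) := by
  have h4 : (0:ℝ) < 1/4 := by norm_num
  refine ((integrable_exp_neg_mul_sq h4).const_mul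
    ((n.factorial : ℝ) * 4 ^ n + 1)).mono' ?_ ?_
  · exact ((continuous_pow n).mul
      (((continuous_pow 2).neg.div_const 2).rexp)).aestronglyMeasurable
  · refine Filter.Eventually.of_forall fun x => ?_
    have hfac : (0:ℝ) < n.factorial := by positivity
    have hbase : |x| ^ n ≤ ((n.factorial : ℝ) * 4 ^ n + 1) * Real.exp (x ^ 2 / 4) := by
      have h1 : (x ^ 2 / 4) ^ n / n.factorial ≤ Real.exp (x ^ 2 / 4) :=
        Real.pow_div_factorial_le_exp (x := x ^ 2 / 4) (by positivity) n
      have h2 : |x| ^ (2 * n) ≤ (n.factorial : ℝ) * 4 ^ n * Real.exp (x ^ 2 / 4) := by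
        have : |x| ^ (2 * n) = (x ^ 2 / 4) ^ n * 4 ^ n := by
          rw [pow_mul, sq_abs]; rw [div_pow]; field_simp
        rw [this]
        calc (x ^ 2 / 4) ^ n * 4 ^ n
            ≤ ((n.factorial : ℝ) * Real.exp (x ^ 2 / 4)) * 4 ^ n := by
              apply mul_le_mul_of_nonneg_right _ (by positivity)
              rw [div_le_iff₀ hfac] at h1; linarith [h1]
          _ = (n.factorial : ℝ) * 4 ^ n * Real.exp (x ^ 2 / 4) := by ring
      have h3 : |x| ^ n ≤ 1 + |x| ^ (2 * n) := by
        rcases le_total (|x|) 1 with h | h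
        · have := pow_le_one₀ (abs_nonneg x) h (n := n); linarith [pow_nonneg (abs_nonneg x) (2*n)]
        · have := pow_le_pow_right₀ h (Nat.le_mul_of_pos_left n (by norm_num) : n ≤ 2 * n)
          linarith
      have hexp1 : (1:ℝ) ≤ Real.exp (x ^ 2 / 4) := by
        rw [← Real.exp_zero]; exact Real.exp_le_exp.2 (by positivity)
      calc |x| ^ n ≤ 1 + |x| ^ (2 * n) := h3
        _ ≤ Real.exp (x ^ 2 / 4) + (n.factorial : ℝ) * 4 ^ n * Real.exp (x ^ 2 / 4) := by
            linarith
        _ = ((n.factorial : ℝ) * 4 ^ n + 1) * Real.exp (x ^ 2 / 4) := by ring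
    have hsplit : Real.exp (-x ^ 2 / 2) = (Real.exp (x ^ 2 / 4))⁻¹ * Real.exp (-(1/4) * x ^ 2) := by
      rw [← Real.exp_neg, ← Real.exp_add]; ring_nf
    rw [Real.norm_eq_abs, abs_mul, abs_pow, Real.abs_exp, hsplit]
    rw [show |x| ^ n * ((Real.exp (x ^ 2 / 4))⁻¹ * Real.exp (-(1/4) * x ^ 2))
        = (|x| ^ n * (Real.exp (x ^ 2 / 4))⁻¹) * Real.exp (-(1/4) * x ^ 2) by ring]
    apply mul_le_mul_of_nonneg_right _ (Real.exp_pos _).le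
    rw [← Real.exp_neg]
    calc |x| ^ n * Real.exp (-(x ^ 2 / 4))
        ≤ (((n.factorial : ℝ) * 4 ^ n + 1) * Real.exp (x ^ 2 / 4)) * Real.exp (-(x ^ 2 / 4)) :=
          mul_le_mul_of_nonneg_right hbase (Real.exp_pos _).le
      _ = ((n.factorial : ℝ) * 4 ^ n + 1) := by
          rw [mul_assoc, ← Real.exp_add]; simp

lemma gauss_deriv (n : ℕ) (x : ℝ) :
    HasDerivAt (fun y : ℝ => y ^ (n+1) * Real.exp (-y ^ 2 / 2))
      (((n:ℝ)+1) * x ^ n * Real.exp (-x ^ 2 / 2) - x ^ (n+2) * Real.exp (-x ^ 2 / 2)) x := by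
  have h1 : HasDerivAt (fun y : ℝ => y ^ (n+1)) (((n:ℝ)+1) * x ^ n) x := by
    simpa using hasDerivAt_pow (n+1) x
  have h0 : HasDerivAt (fun y : ℝ => -y ^ 2 / 2) (-x) x := by
    have := (hasDerivAt_pow 2 x).neg.div_const 2
    simpa using this.congr_deriv (by push_cast; ring)
  have h2 : HasDerivAt (fun y : ℝ => Real.exp (-y ^ 2 / 2))
      (Real.exp (-x ^ 2 / 2) * (-x)) x := h0.exp
  have := h1.mul h2
  exact this.congr_deriv (by ring)

lemma gauss_rec (n : ℕ) :
    ∫ x : ℝ, x ^ (n+2) * Real.exp (-x ^ 2 / 2)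
      = ((n:ℝ)+1) * ∫ x : ℝ, x ^ n * Real.exp (-x ^ 2 / 2) := by
  have ha : Integrable (fun x : ℝ => ((n:ℝ)+1) * x ^ n * Real.exp (-x ^ 2 / 2)) := by
    simpa [mul_assoc] using (aux_integrable_pow_gauss n).const_mul ((n:ℝ)+1)
  have hzero := integral_eq_zero_of_hasDerivAt_of_integrable (gauss_deriv n)
    (ha.sub (aux_integrable_pow_gauss (n+2))) (aux_integrable_pow_gauss (n+1))
  rw [integral_sub ha (aux_integrable_pow_gauss (n+2))] at hzero
  have : ∫ x : ℝ, ((n:ℝ)+1) * x ^ n * Real.exp (-x ^ 2 / 2)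
      = ((n:ℝ)+1) * ∫ x : ℝ, x ^ n * Real.exp (-x ^ 2 / 2) := by
    simp_rw [mul_assoc]; exact integral_const_mul _ _
  linarith [this ▸ hzero]

lemma gauss_J0 : ∫ x : ℝ, x ^ 0 * Real.exp (-x ^ 2 / 2) = Real.sqrt (2 * π) := by
  have := integral_gaussian (1/2 : ℝ)
  rw [show π / (1/2 : ℝ) = 2 * π by ring] at this
  rw [← this]
  congr 1 with x
  rw [pow_zero, one_mul]
  congr 1
  ring

lemma gauss_J1 : ∫ x : ℝ, x ^ 1 * Real.exp (-x ^ 2 / 2) = 0 := by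
  have hd : ∀ x : ℝ, HasDerivAt (fun y : ℝ => -Real.exp (-y ^ 2 / 2))
      (x ^ 1 * Real.exp (-x ^ 2 / 2)) x := by
    intro x
    have h0 : HasDerivAt (fun y : ℝ => -y ^ 2 / 2) (-x) x := by
      have := (hasDerivAt_pow 2 x).neg.div_const 2
      simpa using this.congr_deriv (by push_cast; ring)
    have := h0.exp.neg
    exact this.congr_deriv (by ring)
  have hint : Integrable (fun x : ℝ => -Real.exp (-x ^ 2 / 2)) :=
    (aux_integrable_pow_gauss 0).neg.congr (Filter.Eventually.of_forall fun x => by simp)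
  exact integral_eq_zero_of_hasDerivAt_of_integrable hd (aux_integrable_pow_gauss 1) hint

lemma gauss_J2 : ∫ x : ℝ, x ^ 2 * Real.exp (-x ^ 2 / 2) = Real.sqrt (2 * π) := by
  have := gauss_rec 0
  rw [gauss_J0] at this
  simpa using this

lemma gauss_J3 : ∫ x : ℝ, x ^ 3 * Real.exp (-x ^ 2 / 2) = 0 := by
  have := gauss_rec 1
  rw [gauss_J1] at this
  simpa using this

lemma gauss_J4 : ∫ x : ℝ, x ^ 4 * Real.exp (-x ^ 2 / 2) = 3 * Real.sqrt (2 * π) := by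
  have := gauss_rec 2
  rw [gauss_J2] at this
  rw [this]; ring

lemma gaussianReal_eq_withDensity :
    gaussianReal 0 1 = volume.withDensity
      (fun x => ((Real.toNNReal (gaussianPDFReal 0 1 x) : ℝ≥0) : ℝ≥0∞)) := by
  rw [gaussianReal_of_var_ne_zero _ one_ne_zero, gaussianPDF_def]
  rfl

lemma pdf_eq (x : ℝ) :
    gaussianPDFReal 0 1 x = (Real.sqrt (2 * π))⁻¹ * Real.exp (-x ^ 2 / 2) := by
  rw [gaussianPDFReal]
  norm_num

lemma integral_gauss_transfer (f : ℝ → ℝ) :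
    ∫ x, f x ∂(gaussianReal 0 1)
      = (Real.sqrt (2 * π))⁻¹ * ∫ x, f x * Real.exp (-x ^ 2 / 2) := by
  rw [gaussianReal_eq_withDensity,
    integral_withDensity_eq_integral_smul
      ((measurable_gaussianPDFReal 0 1).real_toNNReal) f]
  rw [← integral_const_mul]
  congr 1 with x
  rw [NNReal.smul_def, Real.coe_toNNReal _ (gaussianPDFReal_nonneg 0 1 x), pdf_eq,
    smul_eq_mul]
  ring

lemma integrable_pow_gaussianReal (n : ℕ) :
    Integrable (fun x : ℝ => x ^ n) (gaussianReal 0 1) := by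
  rw [gaussianReal_eq_withDensity,
    integrable_withDensity_iff_integrable_smul
      ((measurable_gaussianPDFReal 0 1).real_toNNReal)]
  have : Integrable (fun x : ℝ => (Real.sqrt (2 * π))⁻¹ * (x ^ n * Real.exp (-x ^ 2 / 2))) :=
    (aux_integrable_pow_gauss n).const_mul _
  apply this.congr (Filter.Eventually.of_forall fun x => ?_)
  rw [NNReal.smul_def, Real.coe_toNNReal _ (gaussianPDFReal_nonneg 0 1 x), pdf_eq,
    smul_eq_mul]
  ring

lemma gauss_moment (n : ℕ) :
    ∫ x, x ^ n ∂(gaussianReal 0 1)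
      = (Real.sqrt (2 * π))⁻¹ * ∫ x : ℝ, x ^ n * Real.exp (-x ^ 2 / 2) :=
  integral_gauss_transfer _

lemma sqrt2pi_pos : 0 < Real.sqrt (2 * π) := Real.sqrt_pos.2 (by positivity)

lemma gauss_M0 : ∫ x, x ^ 0 ∂(gaussianReal 0 1) = 1 := by
  rw [gauss_moment, gauss_J0, inv_mul_cancel₀ sqrt2pi_pos.ne']
lemma gauss_M1 : ∫ x, x ^ 1 ∂(gaussianReal 0 1) = 0 := by
  rw [gauss_moment, gauss_J1, mul_zero]
lemma gauss_M2 : ∫ x, x ^ 2 ∂(gaussianReal 0 1) = 1 := by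
  rw [gauss_moment, gauss_J2, inv_mul_cancel₀ sqrt2pi_pos.ne']
lemma gauss_M3 : ∫ x, x ^ 3 ∂(gaussianReal 0 1) = 0 := by
  rw [gauss_moment, gauss_J3, mul_zero]
lemma gauss_M4 : ∫ x, x ^ 4 ∂(gaussianReal 0 1) = 3 := by
  rw [gauss_moment, gauss_J4]
  field_simp

lemma integral_sq_gauss2 (a b c d e f : ℝ) :
    ∫ y : Fin 2 → ℝ,
        (a * y 0 ^ 2 + 2 * b * y 0 * y 1 + c * y 1 ^ 2 + d * y 0 + e * y 1 + f) ^ 2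
        ∂(Measure.pi fun _ : Fin 2 => gaussianReal 0 1)
      = 3*a^2 + 4*b^2 + 3*c^2 + d^2 + e^2 + f^2 + 2*a*c + 2*a*f + 2*c*f := by
  set γ := gaussianReal 0 1 with hγ
  -- reduce to product measure
  have hmp := measurePreserving_piFinTwo (fun _ : Fin 2 => γ)
  have hcomp := hmp.integral_comp'
    (fun z : ℝ × ℝ => (a * z.1 ^ 2 + 2 * b * z.1 * z.2 + c * z.2 ^ 2 + d * z.1 + e * z.2 + f) ^ 2)
  have hcomp2 : (∫ y : Fin 2 → ℝ,
      (a * y 0 ^ 2 + 2 * b * y 0 * y 1 + c * y 1 ^ 2 + d * y 0 + e * y 1 + f) ^ 2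
      ∂(Measure.pi fun _ : Fin 2 => γ))
      = ∫ z : ℝ × ℝ,
          (a * z.1 ^ 2 + 2 * b * z.1 * z.2 + c * z.2 ^ 2 + d * z.1 + e * z.2 + f) ^ 2
          ∂(γ.prod γ) := hcomp
  rw [hcomp2]
  set C : Fin 21 → ℝ := ![a^2, 4*b^2, c^2, d^2, e^2, f^2, 4*a*b, 2*a*c, 2*a*d, 2*a*e, 2*a*f,
      4*b*c, 4*b*d, 4*b*e, 4*b*f, 2*c*d, 2*c*e, 2*c*f, 2*d*e, 2*d*f, 2*e*f] with hC
  set p : Fin 21 → ℕ := ![4,2,0,2,0,0,3,2,3,2,2,1,2,1,1,1,0,0,1,1,0] with hp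
  set q : Fin 21 → ℕ := ![0,2,4,0,2,0,1,2,0,1,0,3,1,2,1,2,3,2,1,0,1] with hq
  have hexp : (fun z : ℝ × ℝ =>
      (a * z.1 ^ 2 + 2 * b * z.1 * z.2 + c * z.2 ^ 2 + d * z.1 + e * z.2 + f) ^ 2)
      = fun z : ℝ × ℝ => ∑ k : Fin 21, C k * (z.1 ^ p k * z.2 ^ q k) := by
    funext z
    simp only [hC, hp, hq, Fin.sum_univ_succ, Fin.sum_univ_zero, Matrix.cons_val_zero,
      Matrix.cons_val_succ]
    ring
  rw [hexp, integral_finset_sum _ (fun k _ =>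
    ((integrable_pow_gaussianReal (p k)).mul_prod (integrable_pow_gaussianReal (q k))).const_mul
      (C k))]
  have hterm : ∀ k : Fin 21, ∫ z : ℝ × ℝ, C k * (z.1 ^ p k * z.2 ^ q k) ∂(γ.prod γ)
      = C k * ((∫ x, x ^ p k ∂γ) * (∫ x, x ^ q k ∂γ)) := by
    intro k
    rw [integral_const_mul,
      integral_prod_mul (μ := γ) (ν := γ) (fun x => x ^ p k) (fun x => x ^ q k)]
  rw [Finset.sum_congr rfl (fun k _ => hterm k)]
  simp only [hC, hp, hq, hγ, Fin.sum_univ_succ, Fin.sum_univ_zero, Matrix.cons_val_zero,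
    Matrix.cons_val_succ, gauss_M0, gauss_M1, gauss_M2, gauss_M3, gauss_M4]
  ring

lemma pointwise_bound (a b c d e f x y : ℝ) :
    (a*x^2 + 2*b*x*y + c*y^2 + d*x + e*y + f)^2
      ≤ 72 * (3*a^2 + 4*b^2 + 3*c^2 + d^2 + e^2 + f^2 + 2*a*c + 2*a*f + 2*c*f)
          * Real.exp ((x^2 + y^2)/2) := by
  have ht : (0:ℝ) ≤ x^2 + y^2 := by positivity
  have hid : (2*a^2+4*b^2+2*c^2+d^2+e^2+f^2) * ((x^2+y^2)^2/2+(x^2+y^2)+1)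
      - (a*x^2+2*b*x*y+c*y^2+d*x+e*y+f)^2
      = 2*(a*x*y-b*x^2)^2 + (a*y^2-c*x^2)^2 + (2*a*x-d*x^2)^2/2 + (2*a*y-e*x^2)^2/2
        + (2*a-f*x^2)^2/2 + 2*(b*y^2-c*x*y)^2 + (2*b*x-d*x*y)^2 + (2*b*y-e*x*y)^2
        + (2*b-f*x*y)^2 + (2*c*x-d*y^2)^2/2 + (2*c*y-e*y^2)^2/2 + (2*c-f*y^2)^2/2
        + (d*y-e*x)^2 + (d-f*x)^2 + (e-f*y)^2 := by ring
  have hsos : (0:ℝ) ≤ 2*(a*x*y-b*x^2)^2 + (a*y^2-c*x^2)^2 + (2*a*x-d*x^2)^2/2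
        + (2*a*y-e*x^2)^2/2 + (2*a-f*x^2)^2/2 + 2*(b*y^2-c*x*y)^2 + (2*b*x-d*x*y)^2
        + (2*b*y-e*x*y)^2 + (2*b-f*x*y)^2 + (2*c*x-d*y^2)^2/2 + (2*c*y-e*y^2)^2/2
        + (2*c-f*y^2)^2/2 + (d*y-e*x)^2 + (d-f*x)^2 + (e-f*y)^2 := by positivity
  have hK : (a*x^2+2*b*x*y+c*y^2+d*x+e*y+f)^2
      ≤ (2*a^2+4*b^2+2*c^2+d^2+e^2+f^2) * ((x^2+y^2)^2/2+(x^2+y^2)+1) := by linarith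
  have hQ : (x^2+y^2)^2/2+(x^2+y^2)+1 ≤ 4 * Real.exp ((x^2+y^2)/2) := by
    have h := Real.quadratic_le_exp_of_nonneg (x := (x^2+y^2)/2) (by positivity)
    have h' : ((x^2+y^2)/2)^2/2 = (x^2+y^2)^2/8 := by ring
    rw [h'] at h
    nlinarith [sq_nonneg (x^2+y^2)]
  have hid2 : 3 * (3*a^2 + 4*b^2 + 3*c^2 + d^2 + e^2 + f^2 + 2*a*c + 2*a*f + 2*c*f)
      - (2*a^2+4*b^2+2*c^2+d^2+e^2+f^2)
      = (7*a+3*c+3*f)^2/7 + 2*(10*c+3*f)^2/35 + f^2/5 + 8*b^2 + 2*d^2 + 2*e^2 := by ring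
  have hKS : (2*a^2+4*b^2+2*c^2+d^2+e^2+f^2)
      ≤ 3 * (3*a^2 + 4*b^2 + 3*c^2 + d^2 + e^2 + f^2 + 2*a*c + 2*a*f + 2*c*f) := by
    have : (0:ℝ) ≤ (7*a+3*c+3*f)^2/7 + 2*(10*c+3*f)^2/35 + f^2/5 + 8*b^2 + 2*d^2 + 2*e^2 := by
      positivity
    linarith
  have hS0 : (0:ℝ) ≤ 3*a^2 + 4*b^2 + 3*c^2 + d^2 + e^2 + f^2 + 2*a*c + 2*a*f + 2*c*f := by
    have hid3 : 3*a^2 + 4*b^2 + 3*c^2 + d^2 + e^2 + f^2 + 2*a*c + 2*a*f + 2*c*f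
        = 2*a^2 + 4*b^2 + 2*c^2 + d^2 + e^2 + (a+c+f)^2 := by ring
    rw [hid3]; positivity
  have hKpos : (0:ℝ) ≤ 2*a^2+4*b^2+2*c^2+d^2+e^2+f^2 := by positivity
  have hepos : (0:ℝ) < Real.exp ((x^2+y^2)/2) := Real.exp_pos _
  calc (a*x^2+2*b*x*y+c*y^2+d*x+e*y+f)^2
      ≤ (2*a^2+4*b^2+2*c^2+d^2+e^2+f^2) * ((x^2+y^2)^2/2+(x^2+y^2)+1) := hK
    _ ≤ (2*a^2+4*b^2+2*c^2+d^2+e^2+f^2) * (4 * Real.exp ((x^2+y^2)/2)) :=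
        mul_le_mul_of_nonneg_left hQ hKpos
    _ = 4 * Real.exp ((x^2+y^2)/2) * (2*a^2+4*b^2+2*c^2+d^2+e^2+f^2) := by ring
    _ ≤ 4 * Real.exp ((x^2+y^2)/2)
        * (3 * (3*a^2 + 4*b^2 + 3*c^2 + d^2 + e^2 + f^2 + 2*a*c + 2*a*f + 2*c*f)) :=
        mul_le_mul_of_nonneg_left hKS (by positivity)
    _ = 12 * ((3*a^2 + 4*b^2 + 3*c^2 + d^2 + e^2 + f^2 + 2*a*c + 2*a*f + 2*c*f)
        * Real.exp ((x^2+y^2)/2)) := by ring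
    _ ≤ 72 * (3*a^2 + 4*b^2 + 3*c^2 + d^2 + e^2 + f^2 + 2*a*c + 2*a*f + 2*c*f)
        * Real.exp ((x^2 + y^2)/2) := by
        have := mul_nonneg hS0 hepos.le
        linarith


end

end AuxGaussian

set_option maxHeartbeats 1000000 in
/-- For a second degree polynomial
`G(x) = a₁₁x₁² + 2a₁₂x₁x₂ + a₂₂x₂² + b₁x₁ + b₂x₂ + c` on `ℝ²` and `X`
standard normal in `ℝ²`, `sup_x |G(x)| e^{−|x|²/4} ≤ 6√2 (E[G(X)²])^{1/2}`. -/
theorem sup_quadratic_bound (a₁₁ a₁₂ a₂₂ b₁ b₂ c : ℝ) :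
    ∀ x : Fin 2 → ℝ,
      |a₁₁ * x 0 ^ 2 + 2 * a₁₂ * x 0 * x 1 + a₂₂ * x 1 ^ 2
          + b₁ * x 0 + b₂ * x 1 + c| * Real.exp (-(x 0 ^ 2 + x 1 ^ 2) / 4)
        ≤ 6 * Real.sqrt 2 *
          Real.sqrt (∫ y : Fin 2 → ℝ,
            (a₁₁ * y 0 ^ 2 + 2 * a₁₂ * y 0 * y 1 + a₂₂ * y 1 ^ 2
              + b₁ * y 0 + b₂ * y 1 + c) ^ 2
            ∂(Measure.pi fun _ : Fin 2 => gaussianReal 0 1)) := by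
  intro x
  rw [integral_sq_gauss2 a₁₁ a₁₂ a₂₂ b₁ b₂ c]
  have hpt := pointwise_bound a₁₁ a₁₂ a₂₂ b₁ b₂ c (x 0) (x 1)
  set S : ℝ := 3*a₁₁^2 + 4*a₁₂^2 + 3*a₂₂^2 + b₁^2 + b₂^2 + c^2 + 2*a₁₁*a₂₂ + 2*a₁₁*c + 2*a₂₂*c
    with hSdef
  set G : ℝ := a₁₁ * x 0 ^ 2 + 2 * a₁₂ * x 0 * x 1 + a₂₂ * x 1 ^ 2 + b₁ * x 0 + b₂ * x 1 + c
    with hGdef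
  have hS0 : (0:ℝ) ≤ S := by
    rw [hSdef, show 3*a₁₁^2 + 4*a₁₂^2 + 3*a₂₂^2 + b₁^2 + b₂^2 + c^2 + 2*a₁₁*a₂₂ + 2*a₁₁*c
        + 2*a₂₂*c = 2*a₁₁^2 + 4*a₁₂^2 + 2*a₂₂^2 + b₁^2 + b₂^2 + (a₁₁+a₂₂+c)^2 by ring]
    positivity
  have hL0 : (0:ℝ) ≤ |G| * Real.exp (-(x 0 ^ 2 + x 1 ^ 2) / 4) := by positivity
  have hsq : (|G| * Real.exp (-(x 0 ^ 2 + x 1 ^ 2) / 4))^2 ≤ 72 * S := by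
    rw [mul_pow, sq_abs]
    have hexp2 : (Real.exp (-(x 0 ^ 2 + x 1 ^ 2) / 4))^2
        = (Real.exp ((x 0 ^ 2 + x 1 ^ 2) / 2))⁻¹ := by
      rw [sq, ← Real.exp_add, ← Real.exp_neg]
      congr 1
      ring
    rw [hexp2]
    calc G^2 * (Real.exp ((x 0 ^ 2 + x 1 ^ 2) / 2))⁻¹
        ≤ (72 * S * Real.exp ((x 0 ^ 2 + x 1 ^ 2) / 2))
            * (Real.exp ((x 0 ^ 2 + x 1 ^ 2) / 2))⁻¹ := by
          apply mul_le_mul_of_nonneg_right _ (by positivity)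
          exact hpt
      _ = 72 * S := by
          field_simp
  calc |G| * Real.exp (-(x 0 ^ 2 + x 1 ^ 2) / 4)
      = Real.sqrt ((|G| * Real.exp (-(x 0 ^ 2 + x 1 ^ 2) / 4))^2) := (Real.sqrt_sq hL0).symm
    _ ≤ Real.sqrt (72 * S) := Real.sqrt_le_sqrt hsq
    _ = 6 * Real.sqrt 2 * Real.sqrt S := by
        rw [show (72:ℝ) * S = (6*Real.sqrt 2)^2 * S by
            rw [mul_pow, Real.sq_sqrt (by norm_num : (0:ℝ) ≤ 2)]; ring,
          Real.sqrt_mul (by positivity), Real.sqrt_sq (by positivity)]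
end

section
/- Let X = Σ_X^{1/2} Z and Y = Σ_Y^{1/2} Z be centered normal random vectors in R^n with covariance matrices Σ_X, Σ_Y, let a, b ∈ R^n, and let f(z) = |Σ_Y^{1/2} z − b|², g(z) = |Σ_X^{1/2} z − a|². Then E[|f(Z) − g(Z)|²] = 2‖Σ_X − Σ_Y‖_HS² + (tr Σ_X − tr Σ_Y + |a|² − |b|²)² + 4|Σ_X^{1/2} a − Σ_Y^{1/2} b|². -/
open MeasureTheory ProbabilityTheory

namespace Matrix.PosSemidef
open scoped ComplexOrder
noncomputable def sqrt {n 𝕜 : Type*} [Fintype n] [DecidableEq n] [RCLike 𝕜]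
    {A : Matrix n n 𝕜} (hA : A.PosSemidef) : Matrix n n 𝕜 :=
  hA.1.eigenvectorUnitary.1 * Matrix.diagonal ((↑) ∘ (√·) ∘ hA.1.eigenvalues) *
  (star hA.1.eigenvectorUnitary : Matrix n n 𝕜)
end Matrix.PosSemidef

open scoped ComplexOrder in
lemma Matrix.PosSemidef.sqrt_isHermitian' {n 𝕜 : Type*} [Fintype n] [DecidableEq n] [RCLike 𝕜]
    {A : Matrix n n 𝕜} (hA : A.PosSemidef) : hA.sqrt.IsHermitian := by
  unfold Matrix.PosSemidef.sqrt Matrix.IsHermitian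
  simp only [Matrix.conjTranspose_mul, Matrix.diagonal_conjTranspose, Matrix.star_eq_conjTranspose,
    Matrix.conjTranspose_conjTranspose, Matrix.mul_assoc]
  congr 3
  funext i
  simp

open scoped ComplexOrder in
lemma Matrix.PosSemidef.sqrt_mul_self' {n 𝕜 : Type*} [Fintype n] [DecidableEq n] [RCLike 𝕜]
    {A : Matrix n n 𝕜} (hA : A.PosSemidef) : hA.sqrt * hA.sqrt = A := by
  unfold Matrix.PosSemidef.sqrt
  have hU : (star hA.1.eigenvectorUnitary : Matrix n n 𝕜) * hA.1.eigenvectorUnitary.1 = 1 :=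
    Unitary.coe_star_mul_self _
  have hD : Matrix.diagonal ((↑) ∘ (√·) ∘ hA.1.eigenvalues) *
      Matrix.diagonal ((↑) ∘ (√·) ∘ hA.1.eigenvalues)
      = Matrix.diagonal (RCLike.ofReal ∘ hA.1.eigenvalues : n → 𝕜) := by
    rw [Matrix.diagonal_mul_diagonal]
    congr 1; funext i
    simp only [Function.comp_apply]
    rw [← RCLike.ofReal_mul, Real.mul_self_sqrt (hA.eigenvalues_nonneg i)]
  conv_rhs => rw [hA.1.spectral_theorem, Unitary.conjStarAlgAut_apply]
  calc _ = hA.1.eigenvectorUnitary.1 * Matrix.diagonal ((↑) ∘ (√·) ∘ hA.1.eigenvalues) *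
      ((star hA.1.eigenvectorUnitary : Matrix n n 𝕜) * hA.1.eigenvectorUnitary.1) *
      Matrix.diagonal ((↑) ∘ (√·) ∘ hA.1.eigenvalues) *
      (star hA.1.eigenvectorUnitary : Matrix n n 𝕜) := by simp only [mul_assoc]
    _ = _ := by rw [hU, Matrix.mul_one, ← hD]; simp only [Matrix.mul_assoc]


namespace SecondMomentAux

open Real
open scoped ENNReal NNReal


lemma integrable_pow_mul_gauss (k : ℕ) :
    Integrable fun x : ℝ => x ^ k * exp (-x ^ 2 / 2) := by
  have hbd : ∀ x : ℝ, ‖x ^ k * exp (-x ^ 2 / 2)‖ ≤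
      (k.factorial * exp 1) * exp (-(1/4) * x ^ 2) := by
    intro x
    have h1 : |x| ^ k ≤ k.factorial * exp |x| := by
      have := Real.pow_div_factorial_le_exp |x| (abs_nonneg x) k
      have hk : (0:ℝ) < k.factorial := by positivity
      calc |x| ^ k = (|x| ^ k / k.factorial) * k.factorial := by field_simp
        _ ≤ exp |x| * k.factorial := by
            apply mul_le_mul_of_nonneg_right this hk.le
        _ = _ := by ring
    have h2 : |x| ≤ 1 + x ^ 2 / 4 := by nlinarith [sq_nonneg (|x| - 2), sq_abs x]
    calc ‖x ^ k * exp (-x ^ 2 / 2)‖ = |x| ^ k * exp (-x ^ 2 / 2) := by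
          rw [norm_mul, Real.norm_eq_abs, abs_pow, Real.norm_eq_abs,
            abs_of_pos (exp_pos _)]
      _ ≤ (k.factorial * exp |x|) * exp (-x ^ 2 / 2) := by
          apply mul_le_mul_of_nonneg_right h1 (exp_pos _).le
      _ ≤ (k.factorial * exp (1 + x ^ 2 / 4)) * exp (-x ^ 2 / 2) := by
          have := exp_le_exp.2 h2
          gcongr
      _ = (k.factorial * exp 1) * exp (-(1/4) * x ^ 2) := by
          rw [mul_assoc, mul_assoc, ← Real.exp_add, ← Real.exp_add]
          congr 1
          ring
  refine Integrable.mono' ((integrable_exp_neg_mul_sq (by norm_num : (0:ℝ) < 1/4)).const_mul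
    (k.factorial * exp 1)) ?_ (Filter.Eventually.of_forall hbd)
  exact ((continuous_pow k).mul ((continuous_pow 2).neg.div_const 2).rexp).aestronglyMeasurable

lemma gauss_I0 : ∫ x : ℝ, exp (-x ^ 2 / 2) = √(2 * π) := by
  have : ∀ x : ℝ, exp (-x ^ 2 / 2) = exp (-(1/2) * x ^ 2) := by intro x; ring_nf
  simp_rw [this, integral_gaussian]
  rw [div_div_eq_mul_div, div_one] ; ring_nf

lemma gauss_rec (k : ℕ) :
    ∫ x : ℝ, x ^ (k + 2) * exp (-x ^ 2 / 2)
      = (k + 1) * ∫ x : ℝ, x ^ k * exp (-x ^ 2 / 2) := by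
  have hu : ∀ x : ℝ, HasDerivAt (fun y : ℝ => y ^ (k+1)) ((k+1) * x ^ k) x := by
    intro x
    simpa using hasDerivAt_pow (k+1) x
  have hv : ∀ x : ℝ, HasDerivAt (fun y : ℝ => -exp (-y ^ 2 / 2)) (x * exp (-x ^ 2 / 2)) x := by
    intro x
    have h1 : HasDerivAt (fun y : ℝ => -y ^ 2 / 2) (-x) x := by
      have := (hasDerivAt_pow 2 x).neg.div_const 2
      simpa using this.congr_deriv (by ring)
    have := (h1.exp).neg
    exact this.congr_deriv (by ring)
  have key := integral_mul_deriv_eq_deriv_mul_of_integrable (fun x _ => hu x) (fun x _ => hv x) ?_ ?_ ?_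
  · have e1 : ∀ x : ℝ, x ^ (k+1) * (x * exp (-x ^ 2 / 2)) = x ^ (k+2) * exp (-x^2/2) := by
      intro x; ring
    have e2 : ∀ x : ℝ, ((k:ℝ)+1) * x ^ k * -exp (-x ^ 2 / 2) = -(((k:ℝ)+1) * (x ^ k * exp (-x^2/2))) := by
      intro x; ring
    calc ∫ x : ℝ, x ^ (k + 2) * exp (-x ^ 2 / 2)
        = ∫ x : ℝ, (fun y : ℝ => y ^ (k+1)) x * (fun y : ℝ => y * exp (-y ^ 2 / 2)) x := by
          congr 1; funext x; rw [← e1 x]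
      _ = -∫ x : ℝ, ((k:ℝ)+1) * x ^ k * -exp (-x ^ 2 / 2) := key
      _ = (k + 1) * ∫ x : ℝ, x ^ k * exp (-x ^ 2 / 2) := by
          simp_rw [e2, integral_neg, neg_neg, integral_const_mul]
  · have : (fun x : ℝ => x ^ (k+1) * (x * exp (-x^2/2))) = fun x : ℝ => x ^ (k+2) * exp (-x^2/2) := by
      funext x; ring
    show Integrable ((fun y : ℝ => y ^ (k+1)) * fun y : ℝ => y * exp (-y ^ 2 / 2))
    simpa [Pi.mul_def, this] using integrable_pow_mul_gauss (k+2)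
  · show Integrable ((fun y : ℝ => ((k:ℝ)+1) * y ^ k) * fun y : ℝ => -exp (-y ^ 2 / 2))
    have : ((fun y : ℝ => ((k:ℝ)+1) * y ^ k) * fun y : ℝ => -exp (-y ^ 2 / 2))
        = fun y : ℝ => -(((k:ℝ)+1) * (y ^ k * exp (-y^2/2))) := by
      funext x; simp [Pi.mul_apply]; ring
    rw [this]
    exact (((integrable_pow_mul_gauss k).const_mul _).neg)
  · show Integrable ((fun y : ℝ => y ^ (k+1)) * fun y : ℝ => -exp (-y ^ 2 / 2))
    have : ((fun y : ℝ => y ^ (k+1)) * fun y : ℝ => -exp (-y ^ 2 / 2))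
        = fun y : ℝ => -(y ^ (k+1) * exp (-y^2/2)) := by
      funext x; simp [Pi.mul_apply]
    rw [this]
    exact (integrable_pow_mul_gauss (k+1)).neg


lemma pdfReal_eq (x : ℝ) : gaussianPDFReal 0 1 x = (√(2*π))⁻¹ * exp (-x^2/2) := by
  simp [gaussianPDFReal]

lemma gmoment_eq (k : ℕ) :
    ∫ x, x ^ k ∂(gaussianReal 0 1) = (√(2*π))⁻¹ * ∫ x : ℝ, x ^ k * exp (-x^2/2) := by
  rw [gaussianReal_of_var_ne_zero 0 one_ne_zero]
  have hpdf : gaussianPDF 0 1 = fun x => ((gaussianPDFReal 0 1 x).toNNReal : ℝ≥0∞) := rfl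
  rw [hpdf, integral_withDensity_eq_integral_smul
    ((measurable_gaussianPDFReal 0 1).real_toNNReal)]
  simp_rw [NNReal.smul_def, Real.coe_toNNReal _ (gaussianPDFReal_nonneg 0 1 _), smul_eq_mul,
    pdfReal_eq, mul_assoc, integral_const_mul, mul_comm (rexp _)]

lemma integrable_pow_gauss (k : ℕ) : Integrable (fun x => x ^ k) (gaussianReal 0 1) := by
  rw [gaussianReal_of_var_ne_zero 0 one_ne_zero,
    integrable_withDensity_iff (measurable_gaussianPDF 0 1)
      (Filter.Eventually.of_forall fun x => ENNReal.ofReal_lt_top)]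
  have : (fun x : ℝ => x ^ k * (gaussianPDF 0 1 x).toReal)
      = fun x : ℝ => (√(2*π))⁻¹ * (x ^ k * exp (-x^2/2)) := by
    funext x
    rw [gaussianPDF_def, ENNReal.toReal_ofReal (gaussianPDFReal_nonneg 0 1 x), pdfReal_eq]
    ring
  rw [this]
  exact (integrable_pow_mul_gauss k).const_mul _

lemma gmoment_odd (k : ℕ) (hk : Odd k) : ∫ x, x ^ k ∂(gaussianReal 0 1) = 0 := by
  rw [gmoment_eq]
  have : ∫ x : ℝ, x ^ k * exp (-x^2/2) = 0 := by
    have h := MeasureTheory.integral_neg_eq_self (fun x : ℝ => x ^ k * exp (-x^2/2)) volume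
    have he : ∀ x : ℝ, (-x) ^ k * exp (-(-x)^2/2) = -(x ^ k * exp (-x^2/2)) := by
      intro x
      rw [hk.neg_pow, neg_sq, neg_mul]
    simp only [he] at h
    rw [integral_neg] at h
    linarith
  rw [this, mul_zero]

lemma gmoment_zero : ∫ x, x ^ 0 ∂(gaussianReal 0 1) = 1 := by simp

lemma sqrt_two_pi_pos : (0:ℝ) < √(2*π) := by
  have := Real.pi_pos; positivity

lemma gmoment_two : ∫ x, x ^ 2 ∂(gaussianReal 0 1) = 1 := by
  rw [gmoment_eq]
  have h := gauss_rec 0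
  simp only [pow_zero, one_mul, Nat.cast_zero, zero_add] at h
  rw [h, gauss_I0, inv_mul_cancel₀ sqrt_two_pi_pos.ne']

lemma gmoment_four : ∫ x, x ^ 4 ∂(gaussianReal 0 1) = 3 := by
  rw [gmoment_eq]
  have h2 := gauss_rec 0
  simp only [pow_zero, one_mul, Nat.cast_zero, zero_add] at h2
  have h4 := gauss_rec 2
  norm_num at h4
  rw [h4, h2, gauss_I0, ← mul_assoc, mul_comm _ (3:ℝ), mul_assoc,
    inv_mul_cancel₀ sqrt_two_pi_pos.ne', mul_one]


noncomputable def gm (k : ℕ) : ℝ := ∫ x, x ^ k ∂(gaussianReal 0 1)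

variable {n : ℕ}

lemma integrable_monomial (c : Fin n → ℕ) :
    Integrable (fun z : Fin n → ℝ => ∏ m, z m ^ c m)
      (Measure.pi fun _ : Fin n => gaussianReal 0 1) := by
  letI : MeasureSpace ℝ := ⟨gaussianReal 0 1⟩
  haveI : SigmaFinite (volume : Measure ℝ) := inferInstanceAs (SigmaFinite (gaussianReal 0 1))
  exact Integrable.fintype_prod (f := fun i (x : ℝ) => x ^ c i)
    (fun i => integrable_pow_gauss (c i))

lemma integral_monomial (c : Fin n → ℕ) :
    ∫ z, (∏ m, z m ^ c m) ∂(Measure.pi fun _ : Fin n => gaussianReal 0 1)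
      = ∏ m, gm (c m) := by
  letI : MeasureSpace ℝ := ⟨gaussianReal 0 1⟩
  haveI : SigmaFinite (volume : Measure ℝ) := inferInstanceAs (SigmaFinite (gaussianReal 0 1))
  exact MeasureTheory.integral_fintype_prod_eq_prod (fun i (x : ℝ) => x ^ c i)

lemma gm_zero : gm 0 = 1 := gmoment_zero
lemma gm_one : gm 1 = 0 := gmoment_odd 1 (by decide)
lemma gm_two : gm 2 = 1 := gmoment_two
lemma gm_three : gm 3 = 0 := gmoment_odd 3 (by decide)
lemma gm_four : gm 4 = 3 := gmoment_four

lemma prod_pow_ite (z : Fin n → ℝ) (i : Fin n) :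
    ∏ m, z m ^ (if m = i then 1 else 0) = z i := by
  have : ∀ m : Fin n, z m ^ (if m = i then 1 else 0)
      = if m = i then z m ^ 1 else z m ^ 0 := fun m => by split <;> rfl
  simp only [this, pow_one, pow_zero]
  simp [Finset.prod_ite_eq']

lemma mono1 (z : Fin n → ℝ) (i : Fin n) :
    z i = ∏ m, z m ^ ((if m = i then 1 else 0)) := (prod_pow_ite z i).symm

lemma mono2 (z : Fin n → ℝ) (i j : Fin n) :
    z i * z j = ∏ m, z m ^ ((if m = i then 1 else 0) + (if m = j then 1 else 0)) := by
  simp_rw [pow_add, Finset.prod_mul_distrib, prod_pow_ite]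

lemma mono3 (z : Fin n → ℝ) (i j k : Fin n) :
    z i * z j * z k = ∏ m, z m ^ ((if m = i then 1 else 0) + (if m = j then 1 else 0)
      + (if m = k then 1 else 0)) := by
  simp_rw [pow_add, Finset.prod_mul_distrib, prod_pow_ite]

lemma mono4 (z : Fin n → ℝ) (i j k l : Fin n) :
    z i * z j * z k * z l = ∏ m, z m ^ ((if m = i then 1 else 0) + (if m = j then 1 else 0)
      + (if m = k then 1 else 0) + (if m = l then 1 else 0)) := by
  simp_rw [pow_add, Finset.prod_mul_distrib, prod_pow_ite]

lemma int1 (i : Fin n) :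
    Integrable (fun z : Fin n → ℝ => z i) (Measure.pi fun _ : Fin n => gaussianReal 0 1) := by
  simp_rw [mono1 _ i]; exact integrable_monomial _

lemma int2 (i j : Fin n) :
    Integrable (fun z : Fin n → ℝ => z i * z j)
      (Measure.pi fun _ : Fin n => gaussianReal 0 1) := by
  simp_rw [mono2 _ i j]; exact integrable_monomial _

lemma int3 (i j k : Fin n) :
    Integrable (fun z : Fin n → ℝ => z i * z j * z k)
      (Measure.pi fun _ : Fin n => gaussianReal 0 1) := by
  simp_rw [mono3 _ i j k]; exact integrable_monomial _

lemma int4 (i j k l : Fin n) :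
    Integrable (fun z : Fin n → ℝ => z i * z j * z k * z l)
      (Measure.pi fun _ : Fin n => gaussianReal 0 1) := by
  simp_rw [mono4 _ i j k l]; exact integrable_monomial _

lemma prod_eq_single_factor (g : Fin n → ℝ) (i : Fin n) (hi : ∀ m, m ≠ i → g m = 1) :
    ∏ m, g m = g i :=
  Finset.prod_eq_single i (fun m _ hm => hi m hm) (by simp)

lemma prod_eq_two_factors (g : Fin n → ℝ) (i j : Fin n) (hij : i ≠ j)
    (h : ∀ m, m ≠ i → m ≠ j → g m = 1) : ∏ m, g m = g i * g j := by
  rw [← Finset.prod_pair hij]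
  refine (Finset.prod_subset (Finset.subset_univ _) ?_).symm
  intro m _ hm
  simp only [Finset.mem_insert, Finset.mem_singleton] at hm
  push_neg at hm
  exact h m hm.1 hm.2

lemma E1 (i : Fin n) :
    ∫ z, z i ∂(Measure.pi fun _ : Fin n => gaussianReal 0 1) = 0 := by
  simp_rw [mono1 _ i, integral_monomial]
  refine Finset.prod_eq_zero (Finset.mem_univ i) ?_
  simp [gm_one]

lemma E2 (i j : Fin n) :
    ∫ z, z i * z j ∂(Measure.pi fun _ : Fin n => gaussianReal 0 1)
      = if i = j then 1 else 0 := by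
  simp_rw [mono2 _ i j, integral_monomial]
  by_cases h : i = j
  · subst h
    simp only [if_pos rfl]
    rw [prod_eq_single_factor _ i (fun m hm => by simp [hm, gm_zero])]
    simp [gm_two]
  · simp only [if_neg h]
    refine Finset.prod_eq_zero (Finset.mem_univ i) ?_
    simp [h, gm_one]

lemma E3 (i j k : Fin n) :
    ∫ z, z i * z j * z k ∂(Measure.pi fun _ : Fin n => gaussianReal 0 1) = 0 := by
  simp_rw [mono3 _ i j k, integral_monomial]
  by_cases hij : i = j
  · subst hij
    refine Finset.prod_eq_zero (Finset.mem_univ k) ?_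
    by_cases hki : k = i
    · simp [hki, gm_three]
    · simp [hki, gm_one]
  · by_cases hik : i = k
    · subst hik
      refine Finset.prod_eq_zero (Finset.mem_univ j) ?_
      have hji : j ≠ i := fun h => hij h.symm
      simp [hji, gm_one]
    · refine Finset.prod_eq_zero (Finset.mem_univ i) ?_
      simp [hij, hik, gm_one]

lemma E4 (i j k l : Fin n) :
    ∫ z, z i * z j * z k * z l ∂(Measure.pi fun _ : Fin n => gaussianReal 0 1)
      = (if i = j then (1:ℝ) else 0) * (if k = l then 1 else 0)
        + (if i = k then (1:ℝ) else 0) * (if j = l then 1 else 0)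
        + (if i = l then (1:ℝ) else 0) * (if j = k then 1 else 0) := by
  simp_rw [mono4 _ i j k l, integral_monomial]
  by_cases hij : i = j
  · subst hij
    by_cases hkl : k = l
    · subst hkl
      by_cases hik : i = k
      · subst hik
        rw [prod_eq_single_factor _ i (fun m hm => by simp [hm, gm_zero])]
        simp only [if_pos rfl]
        norm_num [gm_four]
      · have hki : ¬ k = i := fun h => hik h.symm
        rw [prod_eq_two_factors _ i k hik (fun m h1 h2 => by simp [h1, h2, gm_zero])]
        simp [hik, hki, gm_two]
    · have hz : (∏ m, gm ((if m = i then 1 else 0) + (if m = i then 1 else 0)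
          + (if m = k then 1 else 0) + (if m = l then 1 else 0))) = 0 := by
        refine Finset.prod_eq_zero (Finset.mem_univ k) ?_
        by_cases hki : k = i
        · have hil : ¬ i = l := fun h => hkl (hki.trans h)
          simp [hki, hkl, hil, gm_three]
        · simp [hki, hkl, gm_one]
      rw [hz]
      by_cases hik : i = k
      · have hil : ¬ i = l := fun h => hkl (hik.symm.trans h)
        simp [hkl, hil]
      · simp [hkl, hik]
  · by_cases hkl : k = l
    · subst hkl
      have hz : (∏ m, gm ((if m = i then 1 else 0) + (if m = j then 1 else 0)
          + (if m = k then 1 else 0) + (if m = k then 1 else 0))) = 0 := by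
        refine Finset.prod_eq_zero (Finset.mem_univ i) ?_
        by_cases hik : i = k
        · have hkj : ¬ k = j := fun h => hij (hik.trans h)
          simp [hij, hik, hkj, gm_three]
        · simp [hij, hik, gm_one]
      rw [hz]
      by_cases hik : i = k
      · have hjk : ¬ j = k := fun h => hij (hik.trans h.symm)
        simp [hij, hjk]
      · simp [hij, hik]
    · by_cases hik : i = k
      · subst hik
        by_cases hjl : j = l
        · subst hjl
          have hji : ¬ j = i := fun h => hij h.symm
          rw [prod_eq_two_factors _ i j hij (fun m h1 h2 => by simp [h1, h2, gm_zero])]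
          simp [hij, hji, gm_two]
        · have hz : (∏ m, gm ((if m = i then 1 else 0) + (if m = j then 1 else 0)
              + (if m = i then 1 else 0) + (if m = l then 1 else 0))) = 0 := by
            refine Finset.prod_eq_zero (Finset.mem_univ l) ?_
            have hlj : ¬ l = j := fun h => hjl h.symm
            by_cases hli : l = i
            · simp [hli, hlj, hij, gm_three]
            · simp [hli, hlj, gm_one]
          rw [hz]
          have hji : ¬ j = i := fun h => hij h.symm
          simp [hij, hjl, hji]
      · by_cases hil : i = l
        · subst hil
          by_cases hjk : j = k
          · subst hjk
            have hji : ¬ j = i := fun h => hij h.symm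
            rw [prod_eq_two_factors _ i j hij (fun m h1 h2 => by simp [h1, h2, gm_zero])]
            simp [hij, hji, gm_two]
          · have hz : (∏ m, gm ((if m = i then 1 else 0) + (if m = j then 1 else 0)
                + (if m = k then 1 else 0) + (if m = i then 1 else 0))) = 0 := by
              refine Finset.prod_eq_zero (Finset.mem_univ k) ?_
              have hki : ¬ k = i := fun h => hik h.symm
              have hkj : ¬ k = j := fun h => hjk h.symm
              simp [hki, hkj, gm_one]
            rw [hz]
            simp [hij, hik, hjk]
        · have hz : (∏ m, gm ((if m = i then 1 else 0) + (if m = j then 1 else 0)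
              + (if m = k then 1 else 0) + (if m = l then 1 else 0))) = 0 := by
            refine Finset.prod_eq_zero (Finset.mem_univ i) ?_
            simp [hij, hik, hil, gm_one]
          rw [hz]
          simp [hij, hik, hil]


variable {n : ℕ}

section QuadSq
variable (A : Matrix (Fin n) (Fin n) ℝ) (c : Fin n → ℝ) (d : ℝ)

-- integrability of the three pieces and their products
lemma intQ : Integrable (fun z : Fin n → ℝ => ∑ p : Fin n × Fin n, A p.1 p.2 * (z p.1 * z p.2))
    (Measure.pi fun _ : Fin n => gaussianReal 0 1) :=
  integrable_finset_sum _ fun p _ => (int2 p.1 p.2).const_mul _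

lemma intL : Integrable (fun z : Fin n → ℝ => ∑ i, c i * z i)
    (Measure.pi fun _ : Fin n => gaussianReal 0 1) :=
  integrable_finset_sum _ fun i _ => (int1 i).const_mul _

lemma QQ_eq : (fun z : Fin n → ℝ =>
      (∑ p : Fin n × Fin n, A p.1 p.2 * (z p.1 * z p.2))
        * (∑ q : Fin n × Fin n, A q.1 q.2 * (z q.1 * z q.2)))
    = fun z : Fin n → ℝ => ∑ p : Fin n × Fin n, ∑ q : Fin n × Fin n,
        A p.1 p.2 * A q.1 q.2 * (z p.1 * z p.2 * z q.1 * z q.2) := by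
  funext z
  rw [Finset.sum_mul_sum]
  exact Finset.sum_congr rfl fun p _ => Finset.sum_congr rfl fun q _ => by ring

lemma intQQ : Integrable (fun z : Fin n → ℝ =>
      (∑ p : Fin n × Fin n, A p.1 p.2 * (z p.1 * z p.2))
        * (∑ q : Fin n × Fin n, A q.1 q.2 * (z q.1 * z q.2)))
    (Measure.pi fun _ : Fin n => gaussianReal 0 1) := by
  rw [QQ_eq]
  exact integrable_finset_sum _ fun p _ =>
    integrable_finset_sum _ fun q _ => (int4 p.1 p.2 q.1 q.2).const_mul _

lemma LL_eq : (fun z : Fin n → ℝ => (∑ i, c i * z i) * (∑ j, c j * z j))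
    = fun z : Fin n → ℝ => ∑ i, ∑ j, c i * c j * (z i * z j) := by
  funext z
  rw [Finset.sum_mul_sum]
  exact Finset.sum_congr rfl fun p _ => Finset.sum_congr rfl fun q _ => by ring

lemma intLL : Integrable (fun z : Fin n → ℝ => (∑ i, c i * z i) * (∑ j, c j * z j))
    (Measure.pi fun _ : Fin n => gaussianReal 0 1) := by
  rw [LL_eq]
  exact integrable_finset_sum _ fun i _ =>
    integrable_finset_sum _ fun j _ => (int2 i j).const_mul _

lemma QL_eq : (fun z : Fin n → ℝ =>
      (∑ p : Fin n × Fin n, A p.1 p.2 * (z p.1 * z p.2)) * (∑ i, c i * z i))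
    = fun z : Fin n → ℝ => ∑ p : Fin n × Fin n, ∑ i,
        A p.1 p.2 * c i * (z p.1 * z p.2 * z i) := by
  funext z
  rw [Finset.sum_mul_sum]
  exact Finset.sum_congr rfl fun p _ => Finset.sum_congr rfl fun q _ => by ring

lemma intQL : Integrable (fun z : Fin n → ℝ =>
      (∑ p : Fin n × Fin n, A p.1 p.2 * (z p.1 * z p.2)) * (∑ i, c i * z i))
    (Measure.pi fun _ : Fin n => gaussianReal 0 1) := by
  rw [QL_eq]
  exact integrable_finset_sum _ fun p _ =>
    integrable_finset_sum _ fun i _ => (int3 p.1 p.2 i).const_mul _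

lemma EQ : ∫ z, (∑ p : Fin n × Fin n, A p.1 p.2 * (z p.1 * z p.2))
      ∂(Measure.pi fun _ : Fin n => gaussianReal 0 1) = ∑ i, A i i := by
  rw [integral_finset_sum _ fun p _ => (int2 p.1 p.2).const_mul _]
  simp_rw [integral_const_mul, E2]
  rw [Fintype.sum_prod_type]
  simp

lemma EL : ∫ z, (∑ i, c i * z i)
      ∂(Measure.pi fun _ : Fin n => gaussianReal 0 1) = 0 := by
  rw [integral_finset_sum _ fun i _ => (int1 i).const_mul _]
  simp_rw [integral_const_mul, E1, mul_zero, Finset.sum_const_zero]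

lemma EQL : ∫ z, (∑ p : Fin n × Fin n, A p.1 p.2 * (z p.1 * z p.2)) * (∑ i, c i * z i)
      ∂(Measure.pi fun _ : Fin n => gaussianReal 0 1) = 0 := by
  rw [QL_eq]
  rw [integral_finset_sum _ fun p _ =>
    integrable_finset_sum _ fun i _ => (int3 p.1 p.2 i).const_mul _]
  have : ∀ p : Fin n × Fin n, ∫ z, (∑ i, A p.1 p.2 * c i * (z p.1 * z p.2 * z i))
      ∂(Measure.pi fun _ : Fin n => gaussianReal 0 1) = 0 := by
    intro p
    rw [integral_finset_sum _ fun i _ => (int3 p.1 p.2 i).const_mul _]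
    simp_rw [integral_const_mul, E3, mul_zero, Finset.sum_const_zero]
  simp_rw [this, Finset.sum_const_zero]

lemma ELL : ∫ z, (∑ i, c i * z i) * (∑ j, c j * z j)
      ∂(Measure.pi fun _ : Fin n => gaussianReal 0 1) = ∑ i, c i ^ 2 := by
  rw [LL_eq]
  rw [integral_finset_sum _ fun i _ =>
    integrable_finset_sum _ fun j _ => (int2 i j).const_mul _]
  have : ∀ i : Fin n, ∫ z, (∑ j, c i * c j * (z i * z j))
      ∂(Measure.pi fun _ : Fin n => gaussianReal 0 1) = c i ^ 2 := by
    intro i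
    rw [integral_finset_sum _ fun j _ => (int2 i j).const_mul _]
    simp_rw [integral_const_mul, E2]
    simp [mul_ite, Finset.sum_ite_eq, sq]
  simp_rw [this]

lemma EQQ (hA : ∀ i j, A j i = A i j) :
    ∫ z, (∑ p : Fin n × Fin n, A p.1 p.2 * (z p.1 * z p.2))
        * (∑ q : Fin n × Fin n, A q.1 q.2 * (z q.1 * z q.2))
      ∂(Measure.pi fun _ : Fin n => gaussianReal 0 1)
    = (∑ i, A i i) ^ 2 + 2 * ∑ i, ∑ j, A i j ^ 2 := by
  rw [QQ_eq]
  rw [integral_finset_sum _ fun p _ =>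
    integrable_finset_sum _ fun q _ => (int4 p.1 p.2 q.1 q.2).const_mul _]
  have step : ∀ p : Fin n × Fin n, ∫ z, (∑ q : Fin n × Fin n,
        A p.1 p.2 * A q.1 q.2 * (z p.1 * z p.2 * z q.1 * z q.2))
      ∂(Measure.pi fun _ : Fin n => gaussianReal 0 1)
      = ∑ q : Fin n × Fin n, A p.1 p.2 * A q.1 q.2 *
        ((if p.1 = p.2 then (1:ℝ) else 0) * (if q.1 = q.2 then 1 else 0)
          + (if p.1 = q.1 then (1:ℝ) else 0) * (if p.2 = q.2 then 1 else 0)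
          + (if p.1 = q.2 then (1:ℝ) else 0) * (if p.2 = q.1 then 1 else 0)) := by
    intro p
    rw [integral_finset_sum _ fun q _ => (int4 p.1 p.2 q.1 q.2).const_mul _]
    simp_rw [integral_const_mul, E4]
  simp_rw [step, mul_add, Finset.sum_add_distrib]
  have h1 : ∑ p : Fin n × Fin n, ∑ q : Fin n × Fin n, A p.1 p.2 * A q.1 q.2 *
      ((if p.1 = p.2 then (1:ℝ) else 0) * (if q.1 = q.2 then 1 else 0))
      = (∑ i, A i i) ^ 2 := by
    have : ∀ p q : Fin n × Fin n, A p.1 p.2 * A q.1 q.2 *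
        ((if p.1 = p.2 then (1:ℝ) else 0) * (if q.1 = q.2 then 1 else 0))
        = (A p.1 p.2 * (if p.1 = p.2 then (1:ℝ) else 0))
          * (A q.1 q.2 * (if q.1 = q.2 then (1:ℝ) else 0)) := fun p q => by ring
    simp_rw [this, ← Finset.sum_mul_sum]
    have hd : ∑ p : Fin n × Fin n, A p.1 p.2 * (if p.1 = p.2 then (1:ℝ) else 0)
        = ∑ i, A i i := by
      rw [Fintype.sum_prod_type]
      simp
    rw [hd, sq]
  have h2 : ∑ p : Fin n × Fin n, ∑ q : Fin n × Fin n, A p.1 p.2 * A q.1 q.2 *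
      ((if p.1 = q.1 then (1:ℝ) else 0) * (if p.2 = q.2 then 1 else 0))
      = ∑ i, ∑ j, A i j ^ 2 := by
    rw [Fintype.sum_prod_type]
    refine Finset.sum_congr rfl fun i _ => ?_
    refine Finset.sum_congr rfl fun j _ => ?_
    rw [Fintype.sum_prod_type]
    simp [mul_ite, ite_mul, mul_zero, zero_mul, Finset.sum_ite_eq, sq]
  have h3 : ∑ p : Fin n × Fin n, ∑ q : Fin n × Fin n, A p.1 p.2 * A q.1 q.2 *
      ((if p.1 = q.2 then (1:ℝ) else 0) * (if p.2 = q.1 then 1 else 0))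
      = ∑ i, ∑ j, A i j ^ 2 := by
    rw [Fintype.sum_prod_type]
    refine Finset.sum_congr rfl fun i _ => ?_
    refine Finset.sum_congr rfl fun j _ => ?_
    rw [Fintype.sum_prod_type]
    rw [Finset.sum_comm]
    simp [mul_ite, ite_mul, mul_zero, zero_mul, Finset.sum_ite_eq, sq, hA i j]
  rw [h1, h2, h3]
  ring

lemma gaussian_quad_sq (hA : ∀ i j, A j i = A i j) :
    ∫ z, (∑ p : Fin n × Fin n, A p.1 p.2 * (z p.1 * z p.2) + ∑ i, c i * z i + d) ^ 2
      ∂(Measure.pi fun _ : Fin n => gaussianReal 0 1)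
    = 2 * ∑ i, ∑ j, A i j ^ 2 + (∑ i, A i i + d) ^ 2 + ∑ i, c i ^ 2 := by
  have hpt : ∀ z : Fin n → ℝ,
      (∑ p : Fin n × Fin n, A p.1 p.2 * (z p.1 * z p.2) + ∑ i, c i * z i + d) ^ 2
      = (∑ p : Fin n × Fin n, A p.1 p.2 * (z p.1 * z p.2))
          * (∑ q : Fin n × Fin n, A q.1 q.2 * (z q.1 * z q.2))
        + ((∑ i, c i * z i) * (∑ j, c j * z j)
        + ((2 * ((∑ p : Fin n × Fin n, A p.1 p.2 * (z p.1 * z p.2)) * (∑ i, c i * z i)))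
        + ((2 * d) * (∑ p : Fin n × Fin n, A p.1 p.2 * (z p.1 * z p.2))
        + ((2 * d) * (∑ i, c i * z i) + d ^ 2)))) := fun z => by ring
  simp_rw [hpt]
  set Q : (Fin n → ℝ) → ℝ := fun z => ∑ p : Fin n × Fin n, A p.1 p.2 * (z p.1 * z p.2) with hQ
  set L : (Fin n → ℝ) → ℝ := fun z => ∑ i, c i * z i with hL
  have iQQ : Integrable (fun z : Fin n → ℝ => Q z * Q z)
      (Measure.pi fun _ : Fin n => gaussianReal 0 1) := intQQ A
  have iLL : Integrable (fun z : Fin n → ℝ => L z * L z)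
      (Measure.pi fun _ : Fin n => gaussianReal 0 1) := intLL c
  have iQL : Integrable (fun z : Fin n → ℝ => 2 * (Q z * L z))
      (Measure.pi fun _ : Fin n => gaussianReal 0 1) := (intQL A c).const_mul 2
  have iQ2 : Integrable (fun z : Fin n → ℝ => 2 * d * Q z)
      (Measure.pi fun _ : Fin n => gaussianReal 0 1) := (intQ A).const_mul (2*d)
  have iL2 : Integrable (fun z : Fin n → ℝ => 2 * d * L z)
      (Measure.pi fun _ : Fin n => gaussianReal 0 1) := (intL c).const_mul (2*d)
  have ic : Integrable (fun _ : Fin n → ℝ => d ^ 2)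
      (Measure.pi fun _ : Fin n => gaussianReal 0 1) := integrable_const _
  have h4 : Integrable (fun z : Fin n → ℝ => 2 * d * L z + d ^ 2)
      (Measure.pi fun _ : Fin n => gaussianReal 0 1) := iL2.add ic
  have h3' : Integrable (fun z : Fin n → ℝ => 2 * d * Q z + (2 * d * L z + d ^ 2))
      (Measure.pi fun _ : Fin n => gaussianReal 0 1) := iQ2.add h4
  have h2' : Integrable (fun z : Fin n → ℝ => 2 * (Q z * L z) + (2 * d * Q z + (2 * d * L z + d ^ 2)))
      (Measure.pi fun _ : Fin n => gaussianReal 0 1) := iQL.add h3'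
  have h1' : Integrable (fun z : Fin n → ℝ =>
      L z * L z + (2 * (Q z * L z) + (2 * d * Q z + (2 * d * L z + d ^ 2))))
      (Measure.pi fun _ : Fin n => gaussianReal 0 1) := iLL.add h2'
  rw [integral_add iQQ h1', integral_add iLL h2', integral_add iQL h3',
    integral_add iQ2 h4, integral_add iL2 ic]
  rw [hQ, hL]
  rw [integral_const_mul, integral_const_mul, integral_const_mul,
    EQQ A hA, ELL c, EQL A c, EQ A, EL c, integral_const]
  simp only [measure_univ, ENNReal.toReal_one, smul_eq_mul, one_mul, probReal_univ, mul_one]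
  ring
end QuadSq


variable {n : ℕ}

lemma sum_sq_expand (M : Matrix (Fin n) (Fin n) ℝ) (v z : Fin n → ℝ) :
    ∑ i, ((∑ j, M i j * z j) - v i) ^ 2
      = ∑ p : Fin n × Fin n, (∑ m, M m p.1 * M m p.2) * (z p.1 * z p.2)
        - 2 * ∑ j, (∑ m, M m j * v m) * z j + ∑ i, v i ^ 2 := by
  have step : ∀ i, ((∑ j, M i j * z j) - v i) ^ 2
      = (∑ j, M i j * z j) * (∑ k, M i k * z k) - 2 * (v i * ∑ j, M i j * z j)
        + v i ^ 2 := fun i => by ring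
  simp_rw [step, Finset.sum_add_distrib, Finset.sum_sub_distrib, ← Finset.mul_sum]
  congr 1
  congr 1
  · -- quadratic part
    rw [Fintype.sum_prod_type]
    simp_rw [Finset.sum_mul_sum]
    rw [Finset.sum_comm]
    refine Finset.sum_congr rfl fun j _ => ?_
    rw [Finset.sum_comm]
    refine Finset.sum_congr rfl fun k _ => ?_
    rw [Finset.sum_mul]
    exact Finset.sum_congr rfl fun i _ => by ring
  · -- linear part
    congr 1
    simp_rw [Finset.mul_sum]
    rw [Finset.sum_comm]
    refine Finset.sum_congr rfl fun j _ => ?_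
    rw [Finset.sum_mul]
    exact Finset.sum_congr rfl fun i _ => by ring


end SecondMomentAux

open SecondMomentAux in
/-- For `f(z) = |Σ_Y^{1/2} z − b|²`, `g(z) = |Σ_X^{1/2} z − a|²`
and `Z` standard normal in `ℝⁿ`,
`E[|f(Z) − g(Z)|²] = 2‖Σ_X − Σ_Y‖²_HS + (tr Σ_X − tr Σ_Y + |a|² − |b|²)²
+ 4|Σ_X^{1/2} a − Σ_Y^{1/2} b|²`. -/
theorem second_moment_norm_difference {n : ℕ}
    (SX SY : Matrix (Fin n) (Fin n) ℝ)
    (hX : SX.PosSemidef) (hY : SY.PosSemidef) (a b : Fin n → ℝ) :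
    (∫ z, ((∑ i, (hY.sqrt.mulVec z i - b i) ^ 2)
          - (∑ i, (hX.sqrt.mulVec z i - a i) ^ 2)) ^ 2
        ∂(Measure.pi fun _ : Fin n => gaussianReal 0 1))
      = 2 * (∑ i, ∑ j, (SX i j - SY i j) ^ 2)
        + (SX.trace - SY.trace + ((∑ i, (a i) ^ 2) - ∑ i, (b i) ^ 2)) ^ 2
        + 4 * ∑ i, (hX.sqrt.mulVec a i - hY.sqrt.mulVec b i) ^ 2 := by
  set X := hX.sqrt with hXdef
  set Y := hY.sqrt with hYdef
  have hXsym : ∀ i j, X j i = X i j := by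
    intro i j
    have h := hX.sqrt_isHermitian'
    have := congrFun (congrFun h i) j
    simpa [Matrix.conjTranspose_apply] using this
  have hYsym : ∀ i j, Y j i = Y i j := by
    intro i j
    have h := hY.sqrt_isHermitian'
    have := congrFun (congrFun h i) j
    simpa [Matrix.conjTranspose_apply] using this
  have hXX : ∀ p q : Fin n, ∑ m, X m p * X m q = SX p q := by
    intro p q
    have h := hX.sqrt_mul_self'
    have := congrFun (congrFun h p) q
    rw [Matrix.mul_apply] at this
    rw [← this]
    exact Finset.sum_congr rfl fun m _ => by rw [hXsym p m]
  have hYY : ∀ p q : Fin n, ∑ m, Y m p * Y m q = SY p q := by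
    intro p q
    have h := hY.sqrt_mul_self'
    have := congrFun (congrFun h p) q
    rw [Matrix.mul_apply] at this
    rw [← this]
    exact Finset.sum_congr rfl fun m _ => by rw [hYsym p m]
  have hmv : ∀ (M : Matrix (Fin n) (Fin n) ℝ) (v : Fin n → ℝ) (i : Fin n),
      M.mulVec v i = ∑ j, M i j * v j := by
    intro M v i
    simp [Matrix.mulVec, dotProduct]
  have hpt : ∀ z : Fin n → ℝ,
      ((∑ i, (Y.mulVec z i - b i) ^ 2) - (∑ i, (X.mulVec z i - a i) ^ 2))
      = ∑ p : Fin n × Fin n, (SY - SX) p.1 p.2 * (z p.1 * z p.2)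
        + ∑ i, (2 * (X.mulVec a i - Y.mulVec b i)) * z i
        + ((∑ i, (b i) ^ 2) - ∑ i, (a i) ^ 2) := by
    intro z
    simp_rw [hmv]
    rw [sum_sq_expand Y b z, sum_sq_expand X a z]
    simp_rw [hXX, hYY, Matrix.sub_apply]
    have e1 : ∀ j : Fin n, ∑ m, Y m j * b m = ∑ m, Y j m * b m :=
      fun j => Finset.sum_congr rfl fun m _ => by rw [hYsym j m]
    have e2 : ∀ j : Fin n, ∑ m, X m j * a m = ∑ m, X j m * a m :=
      fun j => Finset.sum_congr rfl fun m _ => by rw [hXsym j m]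
    simp_rw [e1, e2]
    have e5 : ∀ i : Fin n, 2 * ((∑ j, X i j * a j) - (∑ j, Y i j * b j)) * z i
        = 2 * ((∑ j, X i j * a j) * z i) - 2 * ((∑ j, Y i j * b j) * z i) := fun i => by ring
    simp_rw [e5, sub_mul, Finset.sum_sub_distrib]
    have e6 : ∀ i : Fin n, (2 * ∑ j, X i j * a j) * z i
        = 2 * ((∑ j, X i j * a j) * z i) := fun i => by ring
    have e7 : ∀ i : Fin n, (2 * ∑ j, Y i j * b j) * z i
        = 2 * ((∑ j, Y i j * b j) * z i) := fun i => by ring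
    first
    | (simp_rw [e6, e7, ← Finset.mul_sum]; ring)
    | (simp_rw [← Finset.mul_sum]; ring)
    | (simp_rw [e6, e7]; ring)
    | ring
  simp_rw [hpt]
  have hSXsym : ∀ i j : Fin n, SX j i = SX i j := fun i j => by
    have h := congrFun (congrFun hX.1 i) j
    rw [Matrix.conjTranspose_apply] at h
    simpa using h
  have hSYsym : ∀ i j : Fin n, SY j i = SY i j := fun i j => by
    have h := congrFun (congrFun hY.1 i) j
    rw [Matrix.conjTranspose_apply] at h
    simpa using h
  rw [gaussian_quad_sq (SY - SX) (fun i => 2 * (X.mulVec a i - Y.mulVec b i))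
    (((∑ i, (b i) ^ 2) - ∑ i, (a i) ^ 2))
    (fun i j => by simp only [Matrix.sub_apply, hSXsym i j, hSYsym i j])]
  have t1 : ∑ i, ∑ j, ((SY - SX) i j) ^ 2 = ∑ i, ∑ j, (SX i j - SY i j) ^ 2 := by
    refine Finset.sum_congr rfl fun i _ => Finset.sum_congr rfl fun j _ => ?_
    simp only [Matrix.sub_apply]
    ring
  have t2 : ∑ i, (SY - SX) i i = SY.trace - SX.trace := by
    simp [Matrix.sub_apply, Matrix.trace, Matrix.diag, Finset.sum_sub_distrib]
  have t3 : ∑ i, (2 * (X.mulVec a i - Y.mulVec b i)) ^ 2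
      = 4 * ∑ i, (X.mulVec a i - Y.mulVec b i) ^ 2 := by
    rw [Finset.mul_sum]
    exact Finset.sum_congr rfl fun i _ => by ring
  rw [t1, t2, t3]
  ring
end
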